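/- arXiv:1801.08512 — 5 statements merged into one kernel-verified Lean document; each statement's English description precedes it below -/
import Mathlib

section
/- Let p ≥ 1, L ≥ 1, and let R₀ be a p×p real symmetric positive definite matrix with all diagonal entries equal to 1, whose inverse K₀ := R₀⁻¹ satisfies 1/L ≤ λ_min(K₀) ≤ λ_max(K₀) ≤ L. Let R̂ be a p×p real symmetric matrix with all diagonal entries equal to 1 and ‖R̂ − R₀‖_∞ ≤ λ₀ for some λ₀ > 0. Let s denote the number of nonzero off-diagonal entries of K₀ and set c_L := 8L². Suppose λ satisfies 2λ₀ ≤ λ ≤ 1/(8L²) and 8 c_L² s λ² ≤ λ₀/(2L). Let Θ̂_norm be a minimizer of Θ ↦ trace(R̂Θ) − log det(Θ) + λ‖Θ⁻‖₁ over the set of symmetric positive definite p×p matrices. Then ‖Θ̂_norm − K₀‖_F² + λ‖Θ̂_norm⁻ − K₀⁻‖₁ ≤ 8 c_L² s λ², and |||Θ̂_norm − K₀|||₁ ≤ 8 c_L s λ² + 8 c_L² s λ. -/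
open Matrix
open scoped BigOperators

/-- Entrywise supremum norm of a matrix. -/
noncomputable def supNorm {p : ℕ} (A : Matrix (Fin p) (Fin p) ℝ) : ℝ :=
  ⨆ i, ⨆ j, |A i j|

/-- ℓ1-operator norm (maximum column ℓ1-norm) of a matrix. -/
noncomputable def opNorm1 {p : ℕ} (A : Matrix (Fin p) (Fin p) ℝ) : ℝ :=
  ⨆ j, ∑ i, |A i j|

/-- Frobenius norm of a matrix. -/
noncomputable def frobNorm {p : ℕ} (A : Matrix (Fin p) (Fin p) ℝ) : ℝ :=
  Real.sqrt (∑ i, ∑ j, (A i j) ^ 2)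

/-- ℓ1-norm of the off-diagonal part of a matrix: `‖A⁻‖₁ = Σ_{i≠j} |A_{ij}|`. -/
noncomputable def offL1 {p : ℕ} (A : Matrix (Fin p) (Fin p) ℝ) : ℝ :=
  ∑ i, ∑ j, if i = j then 0 else |A i j|

/-- The (normalized) graphical Lasso objective `Θ ↦ trace(R̂Θ) − log det Θ + λ‖Θ⁻‖₁`. -/
noncomputable def glassoObj {p : ℕ} (Rhat : Matrix (Fin p) (Fin p) ℝ) (lam : ℝ)
    (Θ : Matrix (Fin p) (Fin p) ℝ) : ℝ :=
  (Rhat * Θ).trace - Real.log Θ.det + lam * offL1 Θ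

lemma quad_le_xlog (x : ℝ) (hx : |x| ≤ 1/2) : x^2/8 ≤ x - Real.log (1+x) := by
  have h1 : -(1/2) ≤ x := neg_le_of_abs_le hx
  have h2 : x ≤ 1/2 := le_of_abs_le hx
  have hpos : (0:ℝ) < 1 + x := by linarith
  set t : ℝ := x - x^2/8 with ht
  have hexp : 1 + t/2 ≤ Real.exp (t/2) := by
    have := Real.add_one_le_exp (t/2); linarith
  have h12 : (0:ℝ) ≤ 1 + t/2 := by nlinarith
  have hsq : (1 + t/2)^2 ≤ Real.exp t := by
    have : Real.exp t = Real.exp (t/2) * Real.exp (t/2) := by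
      rw [← Real.exp_add]; ring_nf
    rw [this]
    nlinarith [Real.exp_pos (t/2)]
  have hx1 : 1 + x ≤ Real.exp t := by nlinarith
  have hlog : Real.log (1+x) ≤ t := by
    rw [← Real.log_exp t]
    exact Real.log_le_log hpos hx1
  rw [ht] at hlog
  linarith

lemma tlog_le_log1p (m t : ℝ) (hm : -1 < m) (h0 : 0 ≤ t) (h1 : t ≤ 1) :
    t * Real.log (1+m) ≤ Real.log (1 + t*m) := by
  have hconc := strictConcaveOn_log_Ioi.concaveOn
  have h := hconc.2 (Set.mem_Ioi.mpr one_pos) (Set.mem_Ioi.mpr (by linarith : (0:ℝ) < 1+m))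
    (by linarith : (0:ℝ) ≤ 1 - t) h0 (by ring)
  simp only [smul_eq_mul, Real.log_one, mul_zero, mul_one] at h
  calc t * Real.log (1+m) = 0 + t * Real.log (1+m) := by ring
    _ ≤ Real.log (1 - t + t * (1+m)) := h
    _ = Real.log (1 + t*m) := by ring_nf

lemma abs_le_of_sq_le (a b : ℝ) (hb : 0 ≤ b) (h : a^2 ≤ b^2) : |a| ≤ b := by
  by_contra h'
  push_neg at h'
  nlinarith [sq_abs a, abs_nonneg a]

lemma trace_pair {p : ℕ} (A B : Matrix (Fin p) (Fin p) ℝ) :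
    (A*B).trace = ∑ i, ∑ j, A i j * B j i := by
  simp [Matrix.trace, Matrix.diag, Matrix.mul_apply]

lemma posdef_conj {p : ℕ} {A B C : Matrix (Fin p) (Fin p) ℝ} (hA : A.PosDef)
    (hCB : C * B = 1) : (Bᴴ * A * B).PosDef := by
  refine Matrix.PosDef.of_dotProduct_mulVec_pos ?_ ?_
  · exact Matrix.isHermitian_conjTranspose_mul_mul B hA.1
  · intro x hx
    have hBx : B *ᵥ x ≠ 0 := by
      intro h0
      apply hx
      have : C *ᵥ (B *ᵥ x) = x := by rw [Matrix.mulVec_mulVec, hCB, Matrix.one_mulVec]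
      rw [h0, Matrix.mulVec_zero] at this
      exact this.symm
    simpa only [star_mulVec, Matrix.dotProduct_mulVec, Matrix.vecMul_vecMul] using
      hA.dotProduct_mulVec_pos hBx

lemma specThm {p : ℕ} (A : Matrix (Fin p) (Fin p) ℝ) (hA : A.IsHermitian) :
    ∃ U : Matrix (Fin p) (Fin p) ℝ, Uᴴ * U = 1 ∧ U * Uᴴ = 1 ∧
      A = U * Matrix.diagonal hA.eigenvalues * Uᴴ := by
  refine ⟨(hA.eigenvectorUnitary : Matrix (Fin p) (Fin p) ℝ), ?_, ?_, ?_⟩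
  · simpa [Matrix.star_eq_conjTranspose] using
      (Matrix.mem_unitaryGroup_iff'.mp hA.eigenvectorUnitary.2)
  · simpa [Matrix.star_eq_conjTranspose] using
      (Matrix.mem_unitaryGroup_iff.mp hA.eigenvectorUnitary.2)
  · have h := hA.spectral_theorem
    have h2 : Matrix.diagonal (RCLike.ofReal ∘ hA.eigenvalues) = Matrix.diagonal hA.eigenvalues := by
      congr 1
    rw [h2] at h
    simpa [Matrix.star_eq_conjTranspose] using h

lemma conjM {p : ℕ} {V : Matrix (Fin p) (Fin p) ℝ} (hV : Vᴴ * V = 1)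
    (A B : Matrix (Fin p) (Fin p) ℝ) :
    (V*A*Vᴴ) * (V*B*Vᴴ) = V*(A*B)*Vᴴ := by
  have h : Vᴴ * (V * (B * Vᴴ)) = B * Vᴴ := by rw [← mul_assoc, hV, one_mul]
  calc (V*A*Vᴴ)*(V*B*Vᴴ) = V*(A*(Vᴴ*(V*(B*Vᴴ)))) := by simp only [mul_assoc]
    _ = V*(A*(B*Vᴴ)) := by rw [h]
    _ = V*(A*B)*Vᴴ := by simp only [mul_assoc]

lemma trace_conj {p : ℕ} {V B : Matrix (Fin p) (Fin p) ℝ} (h : B * V = 1)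
    (A : Matrix (Fin p) (Fin p) ℝ) : (V * A * B).trace = A.trace := by
  rw [Matrix.trace_mul_cycle, h, one_mul]

lemma det_conj {p : ℕ} {V B : Matrix (Fin p) (Fin p) ℝ} (h : V * B = 1)
    (A : Matrix (Fin p) (Fin p) ℝ) : (V * A * B).det = A.det := by
  have h1 : V.det * B.det = 1 := by rw [← Matrix.det_mul, h, Matrix.det_one]
  calc (V*A*B).det = V.det * A.det * B.det := by rw [Matrix.det_mul, Matrix.det_mul]
    _ = A.det * (V.det * B.det) := by ring
    _ = A.det := by rw [h1, mul_one]

lemma ball_case1 (L lam sN d Q : ℝ) (hL0 : 0 < L) (hlam : 0 < lam) (hd0 : 0 ≤ d) (hQ0 : 0 ≤ Q)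
    (hsN : 0 ≤ sN) (hmain : d^2 ≤ 16*L^2*lam*Q) (hQsq : Q^2 ≤ sN * d^2) :
    d^2 ≤ 256*L^4*sN*lam^2 := by
  rcases eq_or_lt_of_le hd0 with hdz | hdpos
  · rw [← hdz, (by norm_num : ((0:ℝ))^2 = 0)]
    positivity
  · have hB0 : (0:ℝ) ≤ 16 * L^2 * lam * Q := by positivity
    have h2 : d^2 * d^2 ≤ (16*L^2*lam*Q) * (16*L^2*lam*Q) :=
      mul_le_mul hmain hmain (sq_nonneg d) hB0
    have hd2pos : (0:ℝ) < d^2 := by positivity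
    have h4 : 256*L^4*lam^2*Q^2 ≤ 256*L^4*lam^2*(sN*d^2) :=
      mul_le_mul_of_nonneg_left hQsq (by positivity)
    have h5 : d^2 * d^2 ≤ (256*L^4*sN*lam^2) * d^2 := by linarith [h2, h4]
    exact le_of_mul_le_mul_right h5 hd2pos

lemma ball_case2 (L lam sN d Q : ℝ) (hL : 1 ≤ L) (hlam : 0 < lam) (hdpos : 0 < d) (hQ0 : 0 ≤ Q)
    (hsN : 0 ≤ sN) (hs16 : 16384 * L^7 * (sN * lam^2) ≤ 1)
    (hmain : d/(2*L) ≤ 16*L^2*lam*Q) (hQsq : Q^2 ≤ sN * d^2) : False := by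
  have hL0 : (0:ℝ) < L := by linarith
  have h2L0 : (0:ℝ) < 2*L := by linarith
  have h2 : d ≤ 32*L^3*lam*Q := by
    calc d = (d/(2*L)) * (2*L) := by field_simp
      _ ≤ (16*L^2*lam*Q) * (2*L) := mul_le_mul_of_nonneg_right hmain h2L0.le
      _ = 32*L^3*lam*Q := by ring
  have h3 : d*d ≤ (32*L^3*lam*Q)*(32*L^3*lam*Q) :=
    mul_le_mul h2 h2 hdpos.le (by positivity)
  have h4 : 1024*L^6*lam^2*Q^2 ≤ 1024*L^6*lam^2*(sN*d^2) :=
    mul_le_mul_of_nonneg_left hQsq (by positivity)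
  have h6 : d^2 ≤ 1024*L^6*sN*lam^2*d^2 := by linarith [h3, h4]
  have hd2pos : (0:ℝ) < d^2 := by positivity
  have h7 : (1:ℝ) ≤ 1024*L^6*sN*lam^2 := by nlinarith [h6, hd2pos]
  have h8 : L * 1 ≤ L * (1024*L^6*sN*lam^2) := mul_le_mul_of_nonneg_left h7 (by linarith)
  linarith [hs16, h8, hL]

lemma Ld_bound (L lam sN d : ℝ) (hL : 1 ≤ L) (hd0 : 0 ≤ d) (hsN : 0 ≤ sN)
    (hs16 : 16384 * L^7 * (sN * lam^2) ≤ 1) (hd2b : d^2 ≤ 256*L^4*sN*lam^2) : L*d ≤ 1/2 := by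
  have hL0 : (0:ℝ) < L := by linarith
  have hsl2 : (0:ℝ) ≤ sN*lam^2 := by positivity
  have h1 : (L*d)^2 ≤ 256*L^6*sN*lam^2 := by
    have h0 := mul_le_mul_of_nonneg_left hd2b (by positivity : (0:ℝ) ≤ L^2)
    nlinarith [h0]
  have h2 : 256*L^6*sN*lam^2 ≤ 1/64 := by
    have h9 : 0 ≤ (L - 1) * (256*L^6*(sN*lam^2)) :=
      mul_nonneg (by linarith) (by positivity)
    nlinarith [hs16, h9]
  have h3 : |L*d| ≤ 1/8 := by
    apply abs_le_of_sq_le _ _ (by norm_num)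
    nlinarith [h1, h2]
  have h4 := le_of_abs_le h3
  linarith

lemma X_bound (L lam sN d q Q : ℝ) (hL : 1 ≤ L) (hlam : 0 < lam) (hd0 : 0 ≤ d) (hq0 : 0 ≤ q)
    (hQ0 : 0 ≤ Q) (hsN : 0 ≤ sN) (hfin : d^2 + 4*L^2*lam*q ≤ 16*L^2*lam*Q)
    (hQsq : Q^2 ≤ sN * d^2) (hd2b : d^2 ≤ 256*L^4*sN*lam^2) :
    d^2 + 4*L^2*lam*q ≤ 256*L^4*sN*lam^2 := by
  have hL0 : (0:ℝ) < L := by linarith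
  have hb : (0:ℝ) ≤ 256*L^4*sN*lam^2 := by positivity
  have h5 : sN*d^2 ≤ sN*(256*L^4*sN*lam^2) := mul_le_mul_of_nonneg_left hd2b hsN
  have h2 : (16*L^2*lam*Q)^2 ≤ (256*L^4*sN*lam^2)^2 := by
    have p1 : 256*L^4*lam^2*Q^2 ≤ 256*L^4*lam^2*(sN*d^2) :=
      mul_le_mul_of_nonneg_left hQsq (by positivity)
    have p2 : 256*L^4*lam^2*(sN*d^2) ≤ 256*L^4*lam^2*(sN*(256*L^4*sN*lam^2)) :=
      mul_le_mul_of_nonneg_left h5 (by positivity)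
    nlinarith [p1, p2]
  have h6 := abs_le_of_sq_le _ _ hb h2
  have hpos : (0:ℝ) ≤ 16*L^2*lam*Q := by positivity
  rw [abs_of_nonneg hpos] at h6
  linarith

lemma final_one (L lam sN cL d q : ℝ) (hL : 1 ≤ L) (hlam : 0 < lam) (hq0 : 0 ≤ q) (hsN : 0 ≤ sN)
    (hcL : cL = 8*L^2) (hX : d^2 + 4*L^2*lam*q ≤ 256*L^4*sN*lam^2) :
    d^2 + lam*q ≤ 8*cL^2*sN*lam^2 := by
  have hL0 : (0:ℝ) < L := by linarith
  have h1 : lam*q ≤ 4*L^2*lam*q := by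
    have h0 : (0:ℝ) ≤ lam*q := mul_nonneg hlam.le hq0
    have h9 : (0:ℝ) ≤ (4*L^2 - 1) * (lam*q) := mul_nonneg (by nlinarith [hL]) h0
    nlinarith [h9]
  have hsl2 : (0:ℝ) ≤ sN*lam^2 := by positivity
  have h2 : (256:ℝ)*L^4*sN*lam^2 ≤ 8*cL^2*sN*lam^2 := by
    rw [hcL]
    have h9 : (0:ℝ) ≤ L^4*(sN*lam^2) := mul_nonneg (by positivity) hsl2
    nlinarith [h9]
  linarith

lemma final_two (L lam sN cL d q op : ℝ) (hL : 1 ≤ L) (hlam : 0 < lam) (hd0 : 0 ≤ d)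
    (hq0 : 0 ≤ q) (hsN : 0 ≤ sN) (hss : sN ≤ sN^2) (hcL : cL = 8*L^2)
    (hX : d^2 + 4*L^2*lam*q ≤ 256*L^4*sN*lam^2) (hop : op ≤ d + q) :
    op ≤ 8*cL*sN*lam^2 + 8*cL^2*sN*lam := by
  have hL0 : (0:ℝ) < L := by linarith
  have hqle : q ≤ 64*L^2*sN*lam := by
    have h4 : (0:ℝ) < 4*L^2*lam := by positivity
    have h5 : 4*L^2*lam*q ≤ 4*L^2*lam*(64*L^2*sN*lam) := by nlinarith only [hX, sq_nonneg d]
    exact le_of_mul_le_mul_left h5 h4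
  have hdle : d ≤ 16*L^2*sN*lam := by
    have hb : (0:ℝ) ≤ 16*L^2*sN*lam := by positivity
    have h2 : d^2 ≤ (16*L^2*sN*lam)^2 := by
      have hq4 : (0:ℝ) ≤ 4*L^2*lam*q := by positivity
      have hbb : 256*L^4*lam^2*sN ≤ 256*L^4*lam^2*sN^2 :=
        mul_le_mul_of_nonneg_left hss (by positivity)
      nlinarith [hX, hq4, hbb]
    have h6 := abs_le_of_sq_le d _ hb h2
    calc d = |d| := (abs_of_nonneg hd0).symm
      _ ≤ 16*L^2*sN*lam := h6
  have hsl : (0:ℝ) ≤ sN*lam := by positivity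
  have hL2 : (1:ℝ) ≤ L^2 := by nlinarith
  rw [hcL]
  have h1 : 80*L^2*(sN*lam) ≤ 512*L^4*(sN*lam) := by
    apply mul_le_mul_of_nonneg_right _ hsl
    nlinarith [hL2]
  have h2 : (0:ℝ) ≤ 8*(8*L^2)*sN*lam^2 := by positivity
  nlinarith [hdle, hqle, h1, h2, hop]


set_option maxHeartbeats 1600000 in
/-- oracle inequality for the normalized graphical Lasso, regime `p ≫ n`.
`R₀` is the true correlation matrix (unit diagonal) with inverse `K₀ := R₀⁻¹` having
eigenvalues in `[1/L, L]`; `Rhat` is `R̂` (unit diagonal, `‖R̂ − R₀‖_∞ ≤ λ₀`);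
`Θnorm` is the normalized graphical Lasso estimator `Θ̂_norm`;
`s` is the number of nonzero off-diagonal entries of `K₀`, and `cL = 8L²`. -/
theorem stmt1 {p : ℕ} (hp : 1 ≤ p) (L lam lam0 : ℝ) (hL : 1 ≤ L)
    (R₀ Rhat Θnorm : Matrix (Fin p) (Fin p) ℝ)
    (hR₀pd : R₀.PosDef) (hR₀diag : ∀ i, R₀ i i = 1)
    (K₀ : Matrix (Fin p) (Fin p) ℝ) (hK₀ : K₀ = R₀⁻¹)
    (hK₀pd : K₀.PosDef)
    (heig : ∀ i, 1 / L ≤ hK₀pd.isHermitian.eigenvalues i ∧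
      hK₀pd.isHermitian.eigenvalues i ≤ L)
    (hRhat : Rhat.IsHermitian) (hRhatdiag : ∀ i, Rhat i i = 1)
    (hlam0 : 0 < lam0)
    (hclose : supNorm (Rhat - R₀) ≤ lam0)
    (s : ℕ) (hs : s = {ij : Fin p × Fin p | ij.1 ≠ ij.2 ∧ K₀ ij.1 ij.2 ≠ 0}.ncard)
    (cL : ℝ) (hcL : cL = 8 * L ^ 2)
    (hlam1 : 2 * lam0 ≤ lam) (hlam2 : lam ≤ 1 / (8 * L ^ 2))
    (hlam3 : 8 * cL ^ 2 * s * lam ^ 2 ≤ lam0 / (2 * L))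
    (hΘpd : Θnorm.PosDef)
    (hmin : ∀ Θ : Matrix (Fin p) (Fin p) ℝ, Θ.PosDef →
      glassoObj Rhat lam Θnorm ≤ glassoObj Rhat lam Θ) :
    frobNorm (Θnorm - K₀) ^ 2 + lam * offL1 (Θnorm - K₀) ≤ 8 * cL ^ 2 * s * lam ^ 2 ∧
    opNorm1 (Θnorm - K₀) ≤ 8 * cL * s * lam ^ 2 + 8 * cL ^ 2 * s * lam := by
  classical
  have hL0 : (0:ℝ) < L := lt_of_lt_of_le one_pos hL
  have hlam_pos : 0 < lam := lt_of_lt_of_le (by linarith) hlam1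
  -- smallness of s lam^2
  have hs16 : 16384 * L^7 * ((s:ℝ) * lam^2) ≤ 1 := by
    have h2L : (0:ℝ) < 2 * L := by linarith
    have hlam3' := hlam3
    rw [hcL] at hlam3'
    have h1 : 8 * (8*L^2)^2 * (s:ℝ) * lam^2 * (2*L) ≤ lam0 := by
      rw [← le_div_iff₀ h2L]
      exact hlam3'
    have h3 : 2048 * L^5 * ((s:ℝ)*lam^2) ≤ lam := by nlinarith [h1, hlam1]
    have h4 : lam * (8 * L^2) ≤ 1 := by
      have h5 : (0:ℝ) < 8 * L^2 := by positivity
      rw [le_div_iff₀ h5] at hlam2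
      linarith
    have h6 := mul_le_mul_of_nonneg_left h3 (by positivity : (0:ℝ) ≤ 8 * L^2)
    nlinarith [h6, h4]
  set Δ : Matrix (Fin p) (Fin p) ℝ := Θnorm - K₀ with hΔdef
  have hΔherm : Δ.IsHermitian := hΘpd.isHermitian.sub hK₀pd.isHermitian
  have hΔsymm : ∀ i j, Δ j i = Δ i j := by
    intro i j
    simpa using hΔherm.apply i j
  -- eigen data for K₀ and R₀
  obtain ⟨V, hV1, hV2, hVspec⟩ := specThm K₀ hK₀pd.isHermitian
  set e : Fin p → ℝ := hK₀pd.isHermitian.eigenvalues with he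
  have hepos : ∀ i, 0 < e i := fun i => hK₀pd.eigenvalues_pos i
  set r : Fin p → ℝ := fun i => (e i)⁻¹ with hr
  have hrb1 : ∀ i, r i ≤ L := by
    intro i
    have h1 := (heig i).1
    rw [div_le_iff₀ hL0] at h1
    show (e i)⁻¹ ≤ L
    rw [inv_eq_one_div, div_le_iff₀ (hepos i)]
    linarith only [h1]
  have hrb2 : ∀ i, 1 ≤ r i * L := by
    intro i
    have h2 := (heig i).2
    show 1 ≤ (e i)⁻¹ * L
    rw [inv_eq_one_div, div_mul_eq_mul_div, one_mul, le_div_iff₀ (hepos i), one_mul]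
    exact h2
  have hrpos : ∀ i, 0 < r i := fun i => inv_pos.mpr (hepos i)
  have hR₀detne : R₀.det ≠ 0 := ne_of_gt hR₀pd.det_pos
  have hKR : K₀ * (V * Matrix.diagonal r * Vᴴ) = 1 := by
    rw [hVspec, conjM hV1, Matrix.diagonal_mul_diagonal]
    have hh : (fun i => e i * r i) = fun _ => (1:ℝ) := by
      funext i
      exact mul_inv_cancel₀ (hepos i).ne'
    rw [hh, Matrix.diagonal_one]
    calc V * 1 * Vᴴ = V * Vᴴ := by rw [mul_one]
      _ = 1 := hV2
  have hR₀spec : R₀ = V * Matrix.diagonal r * Vᴴ := by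
    have hinv : K₀⁻¹ = V * Matrix.diagonal r * Vᴴ := Matrix.inv_eq_right_inv hKR
    rw [← hinv, hK₀, Matrix.nonsing_inv_nonsing_inv R₀ (isUnit_iff_ne_zero.mpr hR₀detne)]
  have hK₀R₀ : K₀ * R₀ = 1 := by rw [hR₀spec]; exact hKR
  -- the square root W of R₀
  set w : Fin p → ℝ := fun i => Real.sqrt (r i) with hw
  have hwpos : ∀ i, 0 < w i := fun i => Real.sqrt_pos.mpr (hrpos i)
  set W : Matrix (Fin p) (Fin p) ℝ := V * Matrix.diagonal w * Vᴴ with hWdef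
  have hWherm : Wᴴ = W := by
    rw [hWdef, Matrix.conjTranspose_mul, Matrix.conjTranspose_mul,
      Matrix.conjTranspose_conjTranspose, Matrix.diagonal_conjTranspose]
    have hh : star w = w := by funext i; simp
    rw [hh, mul_assoc]
  have hww : w * w = r := by
    funext i
    exact Real.mul_self_sqrt (hrpos i).le
  have hWW : W * W = R₀ := by
    rw [hWdef, conjM hV1, Matrix.diagonal_mul_diagonal,
      show (fun i => w i * w i) = r from funext fun i => Real.mul_self_sqrt (hrpos i).le]
    exact hR₀spec.symm
  have hWKW : W * K₀ * W = 1 := by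
    rw [hWdef, hVspec, conjM hV1, conjM hV1, Matrix.diagonal_mul_diagonal,
      Matrix.diagonal_mul_diagonal]
    have hh : (fun i => w i * e i * w i) = fun _ => (1:ℝ) := by
      funext i
      have h1 : w i * w i = r i := congrFun hww i
      calc w i * e i * w i = w i * w i * e i := by ring
        _ = r i * e i := by rw [h1]
        _ = 1 := inv_mul_cancel₀ (hepos i).ne'
    rw [hh, Matrix.diagonal_one, mul_one, hV2]
  set Wi : Matrix (Fin p) (Fin p) ℝ := V * Matrix.diagonal (fun i => (w i)⁻¹) * Vᴴ with hWidef
  have hWiW : Wi * W = 1 := by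
    rw [hWidef, hWdef, conjM hV1, Matrix.diagonal_mul_diagonal]
    have hh : (fun i => (w i)⁻¹ * w i) = fun _ => (1:ℝ) := by
      funext i
      exact inv_mul_cancel₀ (hwpos i).ne'
    rw [hh, Matrix.diagonal_one, mul_one, hV2]
  -- M and its spectral decomposition
  set M : Matrix (Fin p) (Fin p) ℝ := W * Δ * W with hMdef
  have hMherm : M.IsHermitian := by
    have h := Matrix.isHermitian_conjTranspose_mul_mul W hΔherm
    rw [hWherm] at h
    rw [hMdef]
    exact h
  obtain ⟨U, hU1, hU2, hUspec⟩ := specThm M hMherm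
  set m : Fin p → ℝ := hMherm.eigenvalues with hm
  have hΘunfold : Θnorm = K₀ + Δ := by rw [hΔdef, add_sub_cancel]
  have h1M : W * Θnorm * W = 1 + M := by
    rw [hΘunfold, mul_add, add_mul, hWKW, hMdef]
  have h1Mpd : (1 + M).PosDef := by
    rw [← h1M]
    have hh : W * Θnorm * W = Wᴴ * Θnorm * W := by rw [hWherm]
    rw [hh]
    exact posdef_conj hΘpd hWiW
  have hsplit1 : Matrix.diagonal (fun i => 1 + m i) = 1 + Matrix.diagonal m := by
    rw [← Matrix.diagonal_one, Matrix.diagonal_add]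
  have h3U : Uᴴ * (U * Matrix.diagonal m * Uᴴ) * U = Matrix.diagonal m := by
    calc Uᴴ * (U * Matrix.diagonal m * Uᴴ) * U
        = (Uᴴ*U) * (Matrix.diagonal m * (Uᴴ*U)) := by simp only [mul_assoc]
      _ = Matrix.diagonal m := by rw [hU1, one_mul, mul_one]
  have hUdiag : Uᴴ * (1 + M) * U = Matrix.diagonal (fun i => 1 + m i) := by
    rw [mul_add, mul_one, add_mul, hU1, hUspec, h3U, hsplit1]
  have hdiagpd : (Matrix.diagonal (fun i => 1 + m i)).PosDef := by
    rw [← hUdiag]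
    exact posdef_conj h1Mpd hU1
  have hm1pos : ∀ i, 0 < 1 + m i := Matrix.posDef_diagonal_iff.mp hdiagpd
  have hmgt : ∀ i, -1 < m i := fun i => by have h := hm1pos i; linarith only [h]
  -- trace identities
  have htrR₀Δ : (R₀ * Δ).trace = ∑ i, m i := by
    rw [← hWW, mul_assoc, Matrix.trace_mul_comm, ← hMdef, hUspec,
      trace_conj hU1, Matrix.trace_diagonal]
  have htrM2 : (M * M).trace = ∑ i, (m i)^2 := by
    rw [hUspec, conjM hU1, Matrix.diagonal_mul_diagonal, trace_conj hU1,
      Matrix.trace_diagonal]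
    apply Finset.sum_congr rfl; intro i _
    ring
  -- determinant identities
  have h1Mdiag : (1 : Matrix (Fin p) (Fin p) ℝ) + M = U * Matrix.diagonal (fun i => 1 + m i) * Uᴴ := by
    rw [hsplit1, mul_add, mul_one, add_mul, hU2, ← hUspec]
  have hdet1M : (1 + M).det = ∏ i, (1 + m i) := by
    rw [h1Mdiag, det_conj hU2, Matrix.det_diagonal]
  have hdetΘR : Θnorm.det * R₀.det = ∏ i, (1 + m i) := by
    have h1 : (W * Θnorm * W).det = W.det * Θnorm.det * W.det := by
      rw [Matrix.det_mul, Matrix.det_mul]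
    have h2 : W.det * W.det = R₀.det := by rw [← Matrix.det_mul, hWW]
    calc Θnorm.det * R₀.det = Θnorm.det * (W.det * W.det) := by rw [h2]
      _ = W.det * Θnorm.det * W.det := by ring
      _ = (W * Θnorm * W).det := h1.symm
      _ = (1 + M).det := by rw [h1M]
      _ = ∏ i, (1 + m i) := hdet1M
  have hΘdet_pos : 0 < Θnorm.det := hΘpd.det_pos
  have hR₀det_pos : 0 < R₀.det := hR₀pd.det_pos
  have hdetKR : K₀.det * R₀.det = 1 := by
    rw [← Matrix.det_mul, hK₀R₀, Matrix.det_one]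
  have hlogdet : Real.log Θnorm.det - Real.log K₀.det = ∑ i, Real.log (1 + m i) := by
    have hKdet : K₀.det = (R₀.det)⁻¹ := by
      rw [inv_eq_one_div, eq_div_iff hR₀detne]
      exact hdetKR
    have h1 : Real.log K₀.det = - Real.log R₀.det := by rw [hKdet, Real.log_inv]
    rw [h1, sub_neg_eq_add,
      (Real.log_mul (ne_of_gt hΘdet_pos) (ne_of_gt hR₀det_pos)).symm, hdetΘR]
    exact Real.log_prod (fun i _ => (hm1pos i).ne')
  -- Frobenius norm facts
  set d : ℝ := frobNorm Δ with hd
  have hd0 : 0 ≤ d := Real.sqrt_nonneg _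
  set sq2 : ℝ := ∑ i, ∑ j, (Δ i j)^2 with hsq2
  have hsq2nn : 0 ≤ sq2 := by
    apply Finset.sum_nonneg; intro i _
    apply Finset.sum_nonneg; intro j _
    positivity
  have hdsq : d^2 = sq2 := by
    rw [hd, frobNorm, Real.sq_sqrt hsq2nn]
  set Δ' : Matrix (Fin p) (Fin p) ℝ := Vᴴ * Δ * V with hΔ'
  have hΔ'herm : Δ'.IsHermitian := by
    rw [hΔ']
    exact Matrix.isHermitian_conjTranspose_mul_mul V hΔherm
  have hΔ'symm : ∀ i j, Δ' j i = Δ' i j := by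
    intro i j
    simpa using hΔ'herm.apply i j
  have hΔback : Δ = V * Δ' * Vᴴ := by
    rw [hΔ']
    calc Δ = (V * Vᴴ) * Δ * (V * Vᴴ) := by rw [hV2, one_mul, mul_one]
      _ = V * (Vᴴ * Δ * V) * Vᴴ := by simp only [mul_assoc]
  have htrΔΔ : (Δ * Δ).trace = sq2 := by
    rw [trace_pair, hsq2]
    apply Finset.sum_congr rfl; intro i _
    apply Finset.sum_congr rfl; intro j _
    rw [hΔsymm i j]; ring
  have htrΔ'Δ' : (Δ' * Δ').trace = sq2 := by
    have h1 : Δ' * Δ' = Vᴴ * (Δ * Δ) * V := by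
      rw [hΔ']
      calc Vᴴ * Δ * V * (Vᴴ * Δ * V) = Vᴴ * (Δ * ((V * Vᴴ) * (Δ * V))) := by
            simp only [mul_assoc]
        _ = Vᴴ * (Δ * (1 * (Δ * V))) := by rw [hV2]
        _ = Vᴴ * (Δ * Δ) * V := by rw [one_mul]; simp only [mul_assoc]
    rw [h1, trace_conj hV2, htrΔΔ]
  have hsq2' : sq2 = ∑ i, ∑ j, (Δ' i j)^2 := by
    rw [← htrΔ'Δ', trace_pair]
    apply Finset.sum_congr rfl; intro i _
    apply Finset.sum_congr rfl; intro j _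
    rw [hΔ'symm i j]; ring
  have htrMM' : (M * M).trace = ∑ i, ∑ j, r i * r j * (Δ' i j)^2 := by
    have h1 : M * M = W * (Δ * R₀ * Δ) * W := by
      rw [hMdef]
      calc W * Δ * W * (W * Δ * W) = W * (Δ * ((W * W) * (Δ * W))) := by simp only [mul_assoc]
        _ = W * (Δ * (R₀ * (Δ * W))) := by rw [hWW]
        _ = W * (Δ * R₀ * Δ) * W := by simp only [mul_assoc]
    have h2 : (W * (Δ * R₀ * Δ) * W).trace = (Δ * R₀ * Δ * R₀).trace := by
      rw [Matrix.trace_mul_cycle, hWW, Matrix.trace_mul_comm]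
    have h3 : Δ * R₀ * Δ * R₀ = V * (Δ' * Matrix.diagonal r * (Δ' * Matrix.diagonal r)) * Vᴴ := by
      rw [hΔback, hR₀spec, conjM hV1, conjM hV1, conjM hV1]
      congr 1
      simp only [mul_assoc]
    rw [h1, h2, h3, trace_conj hV1, trace_pair]
    apply Finset.sum_congr rfl; intro i _
    apply Finset.sum_congr rfl; intro j _
    rw [Matrix.mul_diagonal, Matrix.mul_diagonal, hΔ'symm i j]
    ring
  have hm2_le : ∑ i, (m i)^2 ≤ L^2 * sq2 := by
    rw [← htrM2, htrMM', hsq2', Finset.mul_sum]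
    apply Finset.sum_le_sum; intro i _
    rw [Finset.mul_sum]
    apply Finset.sum_le_sum; intro j _
    have h5 : r i * r j ≤ L * L :=
      mul_le_mul (hrb1 i) (hrb1 j) (hrpos j).le hL0.le
    nlinarith only [h5, sq_nonneg (Δ' i j)]
  have hm2_ge : sq2 ≤ L^2 * ∑ i, (m i)^2 := by
    rw [← htrM2, htrMM', hsq2', Finset.mul_sum]
    apply Finset.sum_le_sum; intro i _
    rw [Finset.mul_sum]
    apply Finset.sum_le_sum; intro j _
    have h6 : (1:ℝ) * 1 ≤ (r i * L) * (r j * L) :=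
      mul_le_mul (hrb2 i) (hrb2 j) zero_le_one (mul_pos (hrpos i) hL0).le
    nlinarith only [h6, sq_nonneg (Δ' i j), hL]
  have habs_m : ∀ i, |m i| ≤ L * d := by
    intro i
    apply abs_le_of_sq_le _ _ (by positivity)
    have h1 : (m i)^2 ≤ ∑ j, (m j)^2 :=
      Finset.single_le_sum (fun j _ => sq_nonneg (m j)) (Finset.mem_univ i)
    calc (m i)^2 ≤ L^2 * sq2 := le_trans h1 hm2_le
      _ = (L*d)^2 := by rw [← hdsq]; ring
  -- off-diagonal quantities
  set q : ℝ := offL1 Δ with hq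
  have hq0 : 0 ≤ q := by
    rw [hq, offL1]
    apply Finset.sum_nonneg; intro i _
    apply Finset.sum_nonneg; intro j _
    split <;> positivity
  set S' : Finset (Fin p × Fin p) :=
    Finset.univ.filter (fun ij => ij.1 ≠ ij.2 ∧ K₀ ij.1 ij.2 ≠ 0) with hS'
  have hscard : (s:ℝ) = (S'.card : ℝ) := by
    congr 1
    rw [hs]
    have hh : {ij : Fin p × Fin p | ij.1 ≠ ij.2 ∧ K₀ ij.1 ij.2 ≠ 0} = ↑S' := by
      ext ij
      simp [hS']
    rw [hh, Set.ncard_coe_finset]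
  set Q : ℝ := ∑ ij ∈ S', |Δ ij.1 ij.2| with hQ
  have hQ0 : 0 ≤ Q := Finset.sum_nonneg (fun ij _ => abs_nonneg _)
  have hQsq : Q^2 ≤ (s:ℝ) * sq2 := by
    have h1 : Q^2 ≤ (S'.card : ℝ) * ∑ ij ∈ S', |Δ ij.1 ij.2|^2 := by
      exact_mod_cast sq_sum_le_card_mul_sum_sq (s := S') (f := fun ij => |Δ ij.1 ij.2|)
    have h2 : ∑ ij ∈ S', |Δ ij.1 ij.2|^2 ≤ sq2 := by
      have h3 : ∑ ij ∈ S', |Δ ij.1 ij.2|^2 ≤ ∑ ij : Fin p × Fin p, |Δ ij.1 ij.2|^2 := by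
        apply Finset.sum_le_sum_of_subset_of_nonneg (Finset.filter_subset _ _)
        intro ij _ _
        positivity
      calc ∑ ij ∈ S', |Δ ij.1 ij.2|^2 ≤ ∑ ij : Fin p × Fin p, |Δ ij.1 ij.2|^2 := h3
        _ = ∑ i, ∑ j, |Δ i j|^2 := Fintype.sum_prod_type _
        _ = sq2 := by
            rw [hsq2]
            apply Finset.sum_congr rfl; intro i _
            apply Finset.sum_congr rfl; intro j _
            rw [sq_abs]
    calc Q^2 ≤ (S'.card : ℝ) * ∑ ij ∈ S', |Δ ij.1 ij.2|^2 := h1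
      _ ≤ (S'.card : ℝ) * sq2 := mul_le_mul_of_nonneg_left h2 (Nat.cast_nonneg _)
      _ = (s:ℝ) * sq2 := by rw [hscard]
  have hQdd : Q = ∑ i, ∑ j, (if i ≠ j ∧ K₀ i j ≠ 0 then |Δ i j| else 0) := by
    rw [hQ, hS', Finset.sum_filter, Fintype.sum_prod_type]
  -- bound on trace((Rhat - R₀)Δ)
  have hEbound : ∀ i j, |(Rhat - R₀) i j| ≤ lam0 := by
    intro i j
    have h1 : |(Rhat - R₀) i j| ≤ ⨆ j', |(Rhat - R₀) i j'| :=
      le_ciSup (f := fun j' => |(Rhat - R₀) i j'|)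
        (Set.Finite.bddAbove (Set.finite_range _)) j
    have h2 : (⨆ j', |(Rhat - R₀) i j'|) ≤ ⨆ i', ⨆ j', |(Rhat - R₀) i' j'| :=
      le_ciSup (f := fun i' => ⨆ j', |(Rhat - R₀) i' j'|)
        (Set.Finite.bddAbove (Set.finite_range _)) i
    exact le_trans (le_trans h1 h2) hclose
  set a : ℝ := ((Rhat - R₀) * Δ).trace with ha_def
  have ha : -(lam0 * q) ≤ a := by
    rw [ha_def, Matrix.trace_mul_comm, trace_pair]
    have e0 : -(lam0 * q) = ∑ i, ∑ j, -(lam0 * (if i = j then 0 else |Δ i j|)) := by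
      rw [hq, offL1, Finset.mul_sum, ← Finset.sum_neg_distrib]
      apply Finset.sum_congr rfl; intro i _
      rw [Finset.mul_sum, ← Finset.sum_neg_distrib]
    rw [e0]
    apply Finset.sum_le_sum; intro i _
    apply Finset.sum_le_sum; intro j _
    by_cases hij : i = j
    · subst hij
      simp [Matrix.sub_apply, hRhatdiag, hR₀diag]
    · simp only [if_neg hij]
      have h1 : |(Rhat - R₀) j i| ≤ lam0 := hEbound j i
      have h2 : |Δ i j * (Rhat - R₀) j i| ≤ |Δ i j| * lam0 := by
        rw [abs_mul]
        exact mul_le_mul_of_nonneg_left h1 (abs_nonneg _)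
      have h3 := neg_abs_le (Δ i j * (Rhat - R₀) j i)
      linarith only [h2, h3]
  -- the penalty path function
  set P : ℝ → ℝ := fun t => ∑ i, ∑ j, (if i = j then 0 else |K₀ i j + t * Δ i j|) with hP
  have hP1 : P 1 = offL1 Θnorm := by
    simp only [hP, offL1]
    apply Finset.sum_congr rfl; intro i _
    apply Finset.sum_congr rfl; intro j _
    have hh : K₀ i j + 1 * Δ i j = Θnorm i j := by
      rw [hΔdef]; simp [Matrix.sub_apply]
    rw [hh]
  have hP0 : P 0 = offL1 K₀ := by
    simp only [hP, offL1]
    apply Finset.sum_congr rfl; intro i _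
    apply Finset.sum_congr rfl; intro j _
    simp
  have hPub : ∀ t, 0 ≤ t → t ≤ 1 → P t - P 0 ≤ t * (P 1 - P 0) := by
    intro t ht0 ht1
    have key : P t ≤ (1-t) * P 0 + t * P 1 := by
      simp only [hP]
      rw [Finset.mul_sum, Finset.mul_sum, ← Finset.sum_add_distrib]
      apply Finset.sum_le_sum; intro i _
      rw [Finset.mul_sum, Finset.mul_sum, ← Finset.sum_add_distrib]
      apply Finset.sum_le_sum; intro j _
      by_cases hij : i = j
      · simp [hij]
      · simp only [if_neg hij]
        have h1 : K₀ i j + t * Δ i j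
            = (1-t) * (K₀ i j + 0 * Δ i j) + t * (K₀ i j + 1 * Δ i j) := by ring
        rw [h1]
        calc |(1-t) * (K₀ i j + 0 * Δ i j) + t * (K₀ i j + 1 * Δ i j)|
            ≤ |(1-t) * (K₀ i j + 0 * Δ i j)| + |t * (K₀ i j + 1 * Δ i j)| := abs_add_le _ _
          _ = (1-t) * |K₀ i j + 0 * Δ i j| + t * |K₀ i j + 1 * Δ i j| := by
              rw [abs_mul, abs_mul, abs_of_nonneg (by linarith : (0:ℝ) ≤ 1-t),
                abs_of_nonneg ht0]
    linarith only [key]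
  have hPlb : ∀ t, 0 ≤ t → t ≤ 1 → t * q - 2 * t * Q ≤ P t - P 0 := by
    intro t ht0 ht1
    have e1 : t * q = ∑ i, ∑ j, t * (if i = j then 0 else |Δ i j|) := by
      rw [hq, offL1, Finset.mul_sum]
      apply Finset.sum_congr rfl; intro i _
      rw [Finset.mul_sum]
    have e2 : 2 * t * Q = ∑ i, ∑ j, 2 * t * (if i ≠ j ∧ K₀ i j ≠ 0 then |Δ i j| else 0) := by
      rw [hQdd, Finset.mul_sum]
      apply Finset.sum_congr rfl; intro i _
      rw [Finset.mul_sum]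
    have e3 : P t - P 0 = ∑ i, ∑ j, ((if i = j then (0:ℝ) else |K₀ i j + t * Δ i j|)
        - (if i = j then 0 else |K₀ i j|)) := by
      simp only [hP, zero_mul, add_zero]
      rw [← Finset.sum_sub_distrib]
      refine Finset.sum_congr rfl fun i _ => ?_
      rw [← Finset.sum_sub_distrib]
    rw [e1, e2, ← Finset.sum_sub_distrib, e3]
    apply Finset.sum_le_sum; intro i _
    rw [← Finset.sum_sub_distrib]
    apply Finset.sum_le_sum; intro j _
    by_cases hij : i = j
    · simp [hij]
    · simp only [if_neg hij]
      by_cases hK : K₀ i j = 0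
      · have hc : ¬(i ≠ j ∧ K₀ i j ≠ 0) := by tauto
        rw [if_neg hc, hK, zero_add, abs_mul, abs_of_nonneg ht0, abs_zero]
        linarith only []
      · have hc : i ≠ j ∧ K₀ i j ≠ 0 := ⟨hij, hK⟩
        simp only [if_pos hc]
        have h1 : |K₀ i j| - |t * Δ i j| ≤ |K₀ i j + t * Δ i j| := by
          have h2 := abs_sub_abs_le_abs_sub (K₀ i j) (-(t * Δ i j))
          simp only [abs_neg, sub_neg_eq_add] at h2
          linarith only [h2]
        rw [abs_mul, abs_of_nonneg ht0] at h1
        linarith only [h1]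
  -- minimality at K₀
  have hG1 : (∑ i, (m i - Real.log (1 + m i))) + a + lam * (P 1 - P 0) ≤ 0 := by
    have h := hmin K₀ hK₀pd
    rw [glassoObj, glassoObj] at h
    have htr : (Rhat * Θnorm).trace - (Rhat * K₀).trace = (∑ i, m i) + a := by
      have h1 : Rhat * Θnorm - Rhat * K₀ = Rhat * Δ := by rw [← mul_sub, hΔdef]
      have h2 : Rhat * Δ = R₀ * Δ + (Rhat - R₀) * Δ := by
        rw [← add_mul, add_sub_cancel]
      calc (Rhat * Θnorm).trace - (Rhat * K₀).trace = (Rhat * Θnorm - Rhat * K₀).trace :=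
            (Matrix.trace_sub _ _).symm
        _ = (Rhat * Δ).trace := by rw [h1]
        _ = (R₀ * Δ).trace + ((Rhat - R₀) * Δ).trace := by rw [h2, Matrix.trace_add]
        _ = (∑ i, m i) + a := by rw [htrR₀Δ, ha_def]
    have hsub : ∑ i, (m i - Real.log (1 + m i))
        = (∑ i, m i) - ∑ i, Real.log (1 + m i) := Finset.sum_sub_distrib _ _
    rw [hsub, hP1, hP0]
    linarith only [hlogdet, htr, h]
  -- master inequality at each t ∈ [0,1]
  have hGt : ∀ t, 0 ≤ t → t ≤ 1 →
      (∑ i, (t * m i - Real.log (1 + t * m i))) + t * (lam/2) * q ≤ 2 * t * lam * Q := by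
    intro t ht0 ht1
    have hsum : ∑ i, (t * m i - Real.log (1 + t * m i))
        ≤ t * ∑ i, (m i - Real.log (1 + m i)) := by
      rw [Finset.mul_sum]
      apply Finset.sum_le_sum; intro i _
      have h1 := tlog_le_log1p (m i) t (hmgt i) ht0 ht1
      have h2 : t * (m i - Real.log (1 + m i)) = t * m i - t * Real.log (1 + m i) := by ring
      rw [h2]
      linarith only [h1]
    have hp2 : lam * (P t - P 0) ≤ lam * (t * (P 1 - P 0)) :=
      mul_le_mul_of_nonneg_left (hPub t ht0 ht1) hlam_pos.le
    have hG1t : t * ((∑ i, (m i - Real.log (1 + m i))) + a + lam * (P 1 - P 0)) ≤ 0 := by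
      have h := mul_le_mul_of_nonneg_left hG1 ht0
      simpa using h
    have hX : (∑ i, (t * m i - Real.log (1 + t * m i))) + t * a + lam * (P t - P 0) ≤ 0 := by
      linarith only [hsum, hp2, hG1t]
    have p1 : t * (-(lam0 * q)) ≤ t * a := mul_le_mul_of_nonneg_left ha ht0
    have p2 : lam * (t * q - 2 * t * Q) ≤ lam * (P t - P 0) :=
      mul_le_mul_of_nonneg_left (hPlb t ht0 ht1) hlam_pos.le
    have p3 : (lam/2) * (t * q) ≤ (lam - lam0) * (t * q) :=
      mul_le_mul_of_nonneg_right (by linarith) (mul_nonneg ht0 hq0)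
    linarith only [hX, p1, p2, p3]
  -- ball argument
  have hd2b : d^2 ≤ 256 * L^4 * (s:ℝ) * lam^2 := by
    rcases eq_or_lt_of_le hd0 with hdz | hdpos
    · rw [← hdz, (by norm_num : ((0:ℝ))^2 = 0)]
      positivity
    · have h2Ld : (0:ℝ) < 2*L*d := by positivity
      set t₀ : ℝ := min 1 (1/(2*L*d)) with ht₀
      have ht₀pos : 0 < t₀ := lt_min one_pos (by positivity)
      have ht₀le1 : t₀ ≤ 1 := min_le_left _ _
      have ht₀le2 : t₀ ≤ 1/(2*L*d) := min_le_right _ _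
      have habs : ∀ i, |t₀ * m i| ≤ 1/2 := by
        intro i
        rw [abs_mul, abs_of_nonneg ht₀pos.le]
        calc t₀ * |m i| ≤ (1/(2*L*d)) * (L*d) := by
              apply mul_le_mul ht₀le2 (habs_m i) (abs_nonneg _) (by positivity)
          _ = 1/2 := by field_simp
      have hlow : t₀^2 * d^2 ≤ 8*L^2 * ∑ i, (t₀ * m i - Real.log (1 + t₀ * m i)) := by
        have h2 : ∑ i, (t₀ * m i)^2/8 ≤ ∑ i, (t₀ * m i - Real.log (1 + t₀ * m i)) :=
          Finset.sum_le_sum (fun i _ => quad_le_xlog _ (habs i))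
        have h3 : ∑ i, (t₀ * m i)^2/8 = t₀^2/8 * ∑ i, (m i)^2 := by
          rw [Finset.mul_sum]
          apply Finset.sum_congr rfl; intro i _
          ring
        rw [h3] at h2
        have h5 : d^2 ≤ L^2 * ∑ i, (m i)^2 := by
          rw [hdsq]
          exact hm2_ge
        nlinarith only [sq_nonneg t₀, h2, h5, hL0]
      have hmast := hGt t₀ ht₀pos.le ht₀le1
      have hmast8 := mul_le_mul_of_nonneg_left hmast (by positivity : (0:ℝ) ≤ 8*L^2)
      have hqt : (0:ℝ) ≤ 8*L^2*(t₀*(lam/2)*q) := by positivity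
      have hmain' : t₀^2*d^2 ≤ 8*L^2*(2*t₀*lam*Q) := by nlinarith only [hlow, hmast8, hqt]
      have hmain : t₀ * d^2 ≤ 16*L^2*lam*Q := by
        have h1 : t₀*(t₀*d^2) ≤ t₀*(16*L^2*lam*Q) := by nlinarith only [hmain']
        exact le_of_mul_le_mul_left h1 ht₀pos
      have hQsq' : Q^2 ≤ (s:ℝ) * d^2 := by rw [hdsq]; exact hQsq
      rcases min_cases 1 (1/(2*L*d)) with ⟨hmin1, hge⟩ | ⟨hmin2, hlt⟩
      · have ht1 : t₀ = 1 := by rw [ht₀, hmin1]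
        rw [ht1, one_mul] at hmain
        exact ball_case1 L lam (s:ℝ) d Q hL0 hlam_pos hd0 hQ0 (Nat.cast_nonneg s) hmain hQsq'
      · exfalso
        have ht2 : t₀ = 1/(2*L*d) := by rw [ht₀, hmin2]
        rw [ht2] at hmain
        have heq : 1/(2*L*d) * d^2 = d/(2*L) := by field_simp
        rw [heq] at hmain
        exact ball_case2 L lam (s:ℝ) d Q hL hlam_pos hdpos hQ0 (Nat.cast_nonneg s) hs16
          hmain hQsq'
  -- L d ≤ 1/2
  have hLd : L * d ≤ 1/2 :=
    Ld_bound L lam (s:ℝ) d hL hd0 (Nat.cast_nonneg s) hs16 hd2b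
  have habs1 : ∀ i, |m i| ≤ 1/2 := fun i => le_trans (habs_m i) hLd
  -- final inequality at t = 1
  have hfin : d^2 + 4*L^2*lam*q ≤ 16*L^2*lam*Q := by
    have h := hGt 1 zero_le_one le_rfl
    simp only [one_mul] at h
    have h1 : ∑ i, (m i)^2/8 ≤ ∑ i, (m i - Real.log (1 + m i)) :=
      Finset.sum_le_sum (fun i _ => quad_le_xlog _ (habs1 i))
    have h5 : d^2 ≤ L^2 * ∑ i, (m i)^2 := by
      rw [hdsq]
      exact hm2_ge
    have h8 := mul_le_mul_of_nonneg_left h (by positivity : (0:ℝ) ≤ 8*L^2)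
    have h18 := mul_le_mul_of_nonneg_left h1 (by positivity : (0:ℝ) ≤ 8*L^2)
    have hsumdiv : ∑ i, (m i)^2/8 = (∑ i, (m i)^2)/8 := by rw [Finset.sum_div]
    rw [hsumdiv] at h18
    nlinarith only [h5, h8, h18, hL0]
  have hQsq' : Q^2 ≤ (s:ℝ) * d^2 := by rw [hdsq]; exact hQsq
  have hX : d^2 + 4*L^2*lam*q ≤ 256*L^4*(s:ℝ)*lam^2 :=
    X_bound L lam (s:ℝ) d q Q hL hlam_pos hd0 hq0 hQ0 (Nat.cast_nonneg s) hfin hQsq' hd2b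
  constructor
  · exact final_one L lam (s:ℝ) cL d q hL hlam_pos hq0 (Nat.cast_nonneg s) hcL hX
  · haveI hne : Nonempty (Fin p) := ⟨⟨0, hp⟩⟩
    have hss : (s:ℝ) ≤ (s:ℝ)^2 := by
      rcases Nat.eq_zero_or_pos s with hz|hz
      · simp [hz]
      · have h1 : (1:ℝ) ≤ (s:ℝ) := by exact_mod_cast hz
        nlinarith only [h1]
    have hop : opNorm1 Δ ≤ d + q := by
      rw [opNorm1]
      apply ciSup_le
      intro j
      have hdiag : |Δ j j| ≤ d := by
        apply abs_le_of_sq_le _ _ hd0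
        rw [hdsq]
        calc (Δ j j)^2 ≤ ∑ j', (Δ j j')^2 :=
              Finset.single_le_sum (f := fun j' => (Δ j j')^2)
                (fun j' _ => sq_nonneg _) (Finset.mem_univ j)
          _ ≤ sq2 := by
              rw [hsq2]
              exact Finset.single_le_sum (f := fun i => ∑ j', (Δ i j')^2)
                (fun i _ => Finset.sum_nonneg (fun j' _ => sq_nonneg _)) (Finset.mem_univ j)
      have hsplit : ∑ i, |Δ i j| = |Δ j j| + ∑ i, (if i = j then 0 else |Δ i j|) := by
        have hterm : ∀ i : Fin p, |Δ i j|
            = (if i = j then |Δ i j| else 0) + (if i = j then 0 else |Δ i j|) := by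
          intro i
          split <;> simp
        rw [Finset.sum_congr rfl (fun i _ => hterm i), Finset.sum_add_distrib]
        congr 1
        rw [Finset.sum_ite_eq' Finset.univ j (fun i => |Δ i j|)]
        simp
      have hcolq : ∑ i, (if i = j then (0:ℝ) else |Δ i j|) ≤ q := by
        rw [hq, offL1]
        apply Finset.sum_le_sum
        intro i _
        have hnn : ∀ j' ∈ Finset.univ, (0:ℝ) ≤ if i = j' then 0 else |Δ i j'| := by
          intro j' _
          by_cases h : i = j' <;> simp [h, abs_nonneg]
        exact Finset.single_le_sum hnn (Finset.mem_univ j)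
      rw [hsplit]
      linarith only [hdiag, hcolq]
    exact final_two L lam (s:ℝ) cL d q (opNorm1 Δ) hL hlam_pos hd0 hq0 (Nat.cast_nonneg s)
      hss hcL hX hop
end

section
/- Let Σ₀ be an invertible p×p real matrix with Θ₀ := Σ₀⁻¹ symmetric. Let Σ̂ and Θ̂ be p×p real matrices with Θ̂ symmetric, let λ ≥ 0, and let Ẑ be a p×p matrix with ‖Ẑ‖_∞ ≤ 1 such that the Karush–Kuhn–Tucker-type identity Σ̂ Θ̂ − I + λ Ẑ Θ̂ = 0 holds. Then the de-biased graphical Lasso remainder satisfies ‖2Θ̂ − Θ̂ Σ̂ Θ̂ − Θ₀ + Θ₀(Σ̂ − Σ₀)Θ₀‖_∞ ≤ |||Θ̂ − Θ₀|||₁ · ( ‖Σ̂ − Σ₀‖_∞ · |||Θ₀|||₁ + λ · |||Θ̂|||₁ ). -/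
open Matrix
open scoped BigOperators

private lemma bddR {p : ℕ} (f : Fin p → ℝ) : BddAbove (Set.range f) :=
  (Set.finite_range f).bddAbove

lemma le_supNorm {p : ℕ} (A : Matrix (Fin p) (Fin p) ℝ) (i j : Fin p) :
    |A i j| ≤ supNorm A :=
  le_trans (le_ciSup (bddR fun j => |A i j|) j)
    (le_ciSup (bddR fun i => ⨆ j, |A i j|) i)

lemma supNorm_nonneg {p : ℕ} (A : Matrix (Fin p) (Fin p) ℝ) : 0 ≤ supNorm A := by
  rcases isEmpty_or_nonempty (Fin p) with h | h
  · simp [supNorm, iSup_of_empty', Real.sSup_empty]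
  · obtain ⟨i⟩ := h
    exact le_trans (abs_nonneg (A i i)) (le_supNorm A i i)

lemma supNorm_le {p : ℕ} (A : Matrix (Fin p) (Fin p) ℝ) {c : ℝ} (hc : 0 ≤ c)
    (h : ∀ i j, |A i j| ≤ c) : supNorm A ≤ c := by
  rcases isEmpty_or_nonempty (Fin p) with he | he
  · simpa [supNorm, iSup_of_empty', Real.sSup_empty] using hc
  · exact ciSup_le fun i => ciSup_le fun j => h i j

lemma col_le_opNorm1 {p : ℕ} (A : Matrix (Fin p) (Fin p) ℝ) (j : Fin p) :
    (∑ i, |A i j|) ≤ opNorm1 A :=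
  le_ciSup (bddR fun j => ∑ i, |A i j|) j

lemma opNorm1_nonneg {p : ℕ} (A : Matrix (Fin p) (Fin p) ℝ) : 0 ≤ opNorm1 A := by
  rcases isEmpty_or_nonempty (Fin p) with h | h
  · simp [opNorm1, iSup_of_empty', Real.sSup_empty]
  · obtain ⟨j⟩ := h
    exact le_trans (Finset.sum_nonneg fun i _ => abs_nonneg _) (col_le_opNorm1 A j)

lemma entry3 {p : ℕ} (A B C : Matrix (Fin p) (Fin p) ℝ) (i j : Fin p) :
    |(A * B * C) i j| ≤ (∑ k, |A i k|) * supNorm B * (∑ l, |C l j|) := by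
  calc |(A * B * C) i j| = |∑ l, (∑ k, A i k * B k l) * C l j| := by
        simp [Matrix.mul_apply]
    _ ≤ ∑ l, |∑ k, A i k * B k l| * |C l j| :=
        (Finset.abs_sum_le_sum_abs _ _).trans (le_of_eq (by simp [abs_mul]))
    _ ≤ ∑ l, (∑ k, |A i k| * supNorm B) * |C l j| := by
        refine Finset.sum_le_sum fun l _ => ?_
        refine mul_le_mul_of_nonneg_right ?_ (abs_nonneg _)
        refine (Finset.abs_sum_le_sum_abs _ _).trans ?_
        refine Finset.sum_le_sum fun k _ => ?_
        rw [abs_mul]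
        exact mul_le_mul_of_nonneg_left (le_supNorm B k l) (abs_nonneg _)
    _ = ∑ l, ((∑ k, |A i k|) * supNorm B) * |C l j| :=
        Finset.sum_congr rfl fun l _ => by simp [Finset.sum_mul]
    _ = (∑ k, |A i k|) * supNorm B * (∑ l, |C l j|) := (Finset.mul_sum _ _ _).symm

/-- bound on the remainder of the de-biased graphical Lasso.
`Σ₀` (= `S₀`) invertible with symmetric inverse `Θ₀ := Σ₀⁻¹`; `Θ̂` symmetric; `λ ≥ 0`;
`Ẑ` with `‖Ẑ‖_∞ ≤ 1` satisfying the KKT identity `Σ̂Θ̂ − I + λẐΘ̂ = 0`.  Then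
`‖2Θ̂ − Θ̂Σ̂Θ̂ − Θ₀ + Θ₀(Σ̂ − Σ₀)Θ₀‖_∞ ≤ |||Θ̂ − Θ₀|||₁ (‖Σ̂ − Σ₀‖_∞ |||Θ₀|||₁ + λ |||Θ̂|||₁)`. -/
theorem stmt3 {p : ℕ} (S₀ Shat Θhat Z : Matrix (Fin p) (Fin p) ℝ)
    (lam : ℝ) (hlam : 0 ≤ lam)
    (hS₀ : IsUnit S₀.det)
    (Θ₀ : Matrix (Fin p) (Fin p) ℝ) (hΘ₀ : Θ₀ = S₀⁻¹)
    (hΘ₀sym : Θ₀.IsHermitian) (hΘhatsym : Θhat.IsHermitian)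
    (hZ : supNorm Z ≤ 1)
    (hkkt : Shat * Θhat - 1 + lam • (Z * Θhat) = 0) :
    supNorm ((2 : ℝ) • Θhat - Θhat * Shat * Θhat - Θ₀ + Θ₀ * (Shat - S₀) * Θ₀) ≤
      opNorm1 (Θhat - Θ₀) * (supNorm (Shat - S₀) * opNorm1 Θ₀ + lam * opNorm1 Θhat) := by
  have h1 : lam • (Z * Θhat) - (1 - Shat * Θhat) = 0 := by rw [← hkkt]; abel
  have h1' : lam • (Z * Θhat) = 1 - Shat * Θhat := sub_eq_zero.mp h1
  have h2 : Θ₀ * S₀ = 1 := by rw [hΘ₀]; exact Matrix.nonsing_inv_mul S₀ hS₀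
  have h3 : ∀ X : Matrix (Fin p) (Fin p) ℝ, Θ₀ * (S₀ * X) = X := fun X => by
    rw [← Matrix.mul_assoc, h2, Matrix.one_mul]
  set Δ := Θhat - Θ₀ with hΔ
  set E := Shat - S₀ with hE
  have key : (2 : ℝ) • Θhat - Θhat * Shat * Θhat - Θ₀ + Θ₀ * E * Θ₀
      = lam • (Δ * Z * Θhat) - Θ₀ * E * Δ := by
    have e1 : lam • (Δ * Z * Θhat) = Δ * (lam • (Z * Θhat)) := by
      rw [Matrix.mul_smul, Matrix.mul_assoc]
    rw [e1, h1', hΔ, hE]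
    simp only [Matrix.mul_sub, Matrix.sub_mul, Matrix.mul_one, Matrix.mul_assoc, h3]
    module
  rw [key]
  -- symmetry facts
  have hΘhat' : ∀ a b, Θhat a b = Θhat b a := fun a b => by
    have h := hΘhatsym.apply a b; simp at h; exact h.symm
  have hΘ₀' : ∀ a b, Θ₀ a b = Θ₀ b a := fun a b => by
    have h := hΘ₀sym.apply a b; simp at h; exact h.symm
  have hΔ' : ∀ a b, Δ a b = Δ b a := fun a b => by
    simp [hΔ, Matrix.sub_apply, hΘhat' a b, hΘ₀' a b]
  have hrowΔ : ∀ i : Fin p, (∑ k, |Δ i k|) ≤ opNorm1 Δ := fun i => by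
    calc (∑ k, |Δ i k|) = ∑ k, |Δ k i| := by
          exact Finset.sum_congr rfl fun k _ => by rw [hΔ' i k]
      _ ≤ opNorm1 Δ := col_le_opNorm1 Δ i
  have hrowΘ₀ : ∀ i : Fin p, (∑ k, |Θ₀ i k|) ≤ opNorm1 Θ₀ := fun i => by
    calc (∑ k, |Θ₀ i k|) = ∑ k, |Θ₀ k i| := by
          exact Finset.sum_congr rfl fun k _ => by rw [hΘ₀' i k]
      _ ≤ opNorm1 Θ₀ := col_le_opNorm1 Θ₀ i
  have ha := opNorm1_nonneg Δ
  have hb := opNorm1_nonneg Θhat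
  have hc := opNorm1_nonneg Θ₀
  have hs := supNorm_nonneg E
  have hzn := supNorm_nonneg Z
  refine supNorm_le _ ?_ ?_
  · have : 0 ≤ supNorm E * opNorm1 Θ₀ + lam * opNorm1 Θhat :=
      add_nonneg (mul_nonneg hs hc) (mul_nonneg hlam hb)
    exact mul_nonneg ha this
  intro i j
  have A1 : |(Δ * Z * Θhat) i j| ≤ opNorm1 Δ * opNorm1 Θhat := by
    refine (entry3 Δ Z Θhat i j).trans ?_
    have t1 : (∑ k, |Δ i k|) * supNorm Z ≤ opNorm1 Δ * 1 :=
      mul_le_mul (hrowΔ i) hZ hzn ha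
    have t2 : (∑ k, |Δ i k|) * supNorm Z * (∑ l, |Θhat l j|)
        ≤ opNorm1 Δ * 1 * opNorm1 Θhat :=
      mul_le_mul t1 (col_le_opNorm1 Θhat j)
        (Finset.sum_nonneg fun _ _ => abs_nonneg _) (by linarith)
    linarith [t2]
  have A2 : |(Θ₀ * E * Δ) i j| ≤ opNorm1 Θ₀ * supNorm E * opNorm1 Δ := by
    refine (entry3 Θ₀ E Δ i j).trans ?_
    have t1 : (∑ k, |Θ₀ i k|) * supNorm E ≤ opNorm1 Θ₀ * supNorm E :=
      mul_le_mul_of_nonneg_right (hrowΘ₀ i) hs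
    exact mul_le_mul t1 (col_le_opNorm1 Δ j)
      (Finset.sum_nonneg fun _ _ => abs_nonneg _) (mul_nonneg hc hs)
  have hentry : |(lam • (Δ * Z * Θhat) - Θ₀ * E * Δ) i j|
      ≤ lam * |(Δ * Z * Θhat) i j| + |(Θ₀ * E * Δ) i j| := by
    rw [Matrix.sub_apply, Matrix.smul_apply, smul_eq_mul]
    refine (abs_sub _ _).trans ?_
    rw [abs_mul, abs_of_nonneg hlam]
  have h4 : lam * |(Δ * Z * Θhat) i j| ≤ lam * (opNorm1 Δ * opNorm1 Θhat) :=
    mul_le_mul_of_nonneg_left A1 hlam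
  calc |(lam • (Δ * Z * Θhat) - Θ₀ * E * Δ) i j|
      ≤ lam * (opNorm1 Δ * opNorm1 Θhat) + opNorm1 Θ₀ * supNorm E * opNorm1 Δ := by
        linarith [hentry, h4, A2]
    _ = opNorm1 Δ * (supNorm E * opNorm1 Θ₀ + lam * opNorm1 Θhat) := by ring
end

section
/- Let L ≥ 1 and let Θ₀ be a p×p real symmetric positive definite matrix with 1/L ≤ λ_min(Θ₀) ≤ λ_max(Θ₀) ≤ L, and set Σ₀ := Θ₀⁻¹. Let Δ be a p×p real symmetric matrix with ‖Δ‖_F ≤ 1/(2L). Then Θ₀ + Δ is positive definite (in fact λ_min(Θ₀ + Δ) ≥ 1/(2L)), so that E(Δ) := trace(ΔΣ₀) − [log det(Δ + Θ₀) − log det(Θ₀)] is well defined, and E(Δ) ≥ ‖Δ‖_F² / (2(L + 1/(2L))²). -/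
open Matrix
open scoped BigOperators

section Helpers
variable {n : Type*} [Fintype n] [DecidableEq n]

lemma star_real (U : Matrix n n ℝ) : star U = Uᵀ := by
  rw [Matrix.star_eq_conjTranspose, Matrix.conjTranspose_eq_transpose_of_trivial]

-- conjugated quadratic form
lemma conj_quadform (U : Matrix n n ℝ) (d : n → ℝ) (x : n → ℝ) :
    x ⬝ᵥ ((U * diagonal d * star U) *ᵥ x) = ∑ i, d i * ((star U *ᵥ x) i)^2 := by
  rw [← mulVec_mulVec, ← mulVec_mulVec]
  rw [dotProduct_mulVec x U, star_real, ← mulVec_transpose]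
  simp only [dotProduct, mulVec_diagonal]
  refine Finset.sum_congr rfl fun i _ => ?_
  ring

lemma conj_norm (U : Matrix n n ℝ) (hU : U ∈ Matrix.unitaryGroup n ℝ) (x : n → ℝ) :
    x ⬝ᵥ x = ∑ i, ((star U *ᵥ x) i)^2 := by
  have h1 : (star U *ᵥ x) ⬝ᵥ (star U *ᵥ x) = x ⬝ᵥ ((U * star U) *ᵥ x) := by
    rw [← mulVec_mulVec, dotProduct_mulVec x U, star_real, ← mulVec_transpose]
  have h2 : U * star U = 1 := (Matrix.mem_unitaryGroup_iff).mp hU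
  rw [h2, one_mulVec] at h1
  rw [← h1]
  simp [dotProduct, pow_two]

variable {n : Type*} [Fintype n] [DecidableEq n]

lemma spectral_real {A : Matrix n n ℝ} (hA : A.IsHermitian) :
    A = (hA.eigenvectorUnitary : Matrix n n ℝ) * diagonal hA.eigenvalues *
      star (hA.eigenvectorUnitary : Matrix n n ℝ) := by
  have h := hA.spectral_theorem
  have : (RCLike.ofReal ∘ hA.eigenvalues : n → ℝ) = hA.eigenvalues := by
    funext i; simp [RCLike.ofReal]
  rwa [this] at h

lemma quadform_ge {A : Matrix n n ℝ} (hA : A.IsHermitian) {c : ℝ}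
    (hc : ∀ i, c ≤ hA.eigenvalues i) (x : n → ℝ) :
    c * (x ⬝ᵥ x) ≤ x ⬝ᵥ (A *ᵥ x) := by
  conv_rhs => rw [spectral_real hA]
  rw [conj_quadform, conj_norm _ (hA.eigenvectorUnitary).2, Finset.mul_sum]
  refine Finset.sum_le_sum fun i _ => ?_
  exact mul_le_mul_of_nonneg_right (hc i) (sq_nonneg _)

lemma quadform_le {A : Matrix n n ℝ} (hA : A.IsHermitian) {C : ℝ}
    (hC : ∀ i, hA.eigenvalues i ≤ C) (x : n → ℝ) :
    x ⬝ᵥ (A *ᵥ x) ≤ C * (x ⬝ᵥ x) := by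
  conv_lhs => rw [spectral_real hA]
  rw [conj_quadform, conj_norm _ (hA.eigenvectorUnitary).2, Finset.mul_sum]
  refine Finset.sum_le_sum fun i _ => ?_
  exact mul_le_mul_of_nonneg_right (hC i) (sq_nonneg _)

lemma eigenvalue_ge_of_quadform {A : Matrix n n ℝ} (hA : A.IsHermitian) {c : ℝ}
    (hq : ∀ x : n → ℝ, c * (x ⬝ᵥ x) ≤ x ⬝ᵥ (A *ᵥ x)) (i : n) :
    c ≤ hA.eigenvalues i := by
  have hv : (⇑(hA.eigenvectorBasis i) : n → ℝ) ⬝ᵥ ⇑(hA.eigenvectorBasis i) = 1 := by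
    have h1 : ‖hA.eigenvectorBasis i‖ = 1 := hA.eigenvectorBasis.orthonormal.1 i
    have h2 : (inner ℝ (hA.eigenvectorBasis i) (hA.eigenvectorBasis i) : ℝ) = 1 := by
      rw [real_inner_self_eq_norm_mul_norm, h1]; norm_num
    rw [← h2, PiLp.inner_apply]
    simp [dotProduct, pow_two]
  have := hA.eigenvalues_eq i
  have heq : hA.eigenvalues i =
      (⇑(hA.eigenvectorBasis i) : n → ℝ) ⬝ᵥ (A *ᵥ ⇑(hA.eigenvectorBasis i)) := by
    simpa using this
  rw [heq]
  have := hq (⇑(hA.eigenvectorBasis i))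
  rwa [hv, mul_one] at this

lemma eigenvalue_le_of_quadform {A : Matrix n n ℝ} (hA : A.IsHermitian) {C : ℝ}
    (hq : ∀ x : n → ℝ, x ⬝ᵥ (A *ᵥ x) ≤ C * (x ⬝ᵥ x)) (i : n) :
    hA.eigenvalues i ≤ C := by
  have hv : (⇑(hA.eigenvectorBasis i) : n → ℝ) ⬝ᵥ ⇑(hA.eigenvectorBasis i) = 1 := by
    have h1 : ‖hA.eigenvectorBasis i‖ = 1 := hA.eigenvectorBasis.orthonormal.1 i
    have h2 : (inner ℝ (hA.eigenvectorBasis i) (hA.eigenvectorBasis i) : ℝ) = 1 := by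
      rw [real_inner_self_eq_norm_mul_norm, h1]; norm_num
    rw [← h2, PiLp.inner_apply]
    simp [dotProduct, pow_two]
  have heq : hA.eigenvalues i =
      (⇑(hA.eigenvectorBasis i) : n → ℝ) ⬝ᵥ (A *ᵥ ⇑(hA.eigenvectorBasis i)) := by
    simpa using hA.eigenvalues_eq i
  rw [heq]
  have := hq (⇑(hA.eigenvectorBasis i))
  rwa [hv, mul_one] at this
lemma unitary_conj_inv (U : Matrix n n ℝ) (hU : U ∈ Matrix.unitaryGroup n ℝ)
    (d : n → ℝ) (hd : ∀ i, d i ≠ 0) :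
    (U * diagonal d * star U)⁻¹ = U * diagonal (fun i => (d i)⁻¹) * star U := by
  apply Matrix.inv_eq_left_inv
  have hU1 : star U * U = 1 := Matrix.mem_unitaryGroup_iff'.mp hU
  have hU2 : U * star U = 1 := Matrix.mem_unitaryGroup_iff.mp hU
  have hdd : diagonal (fun i => (d i)⁻¹) * diagonal d = 1 := by
    rw [diagonal_mul_diagonal]
    have : (fun i => (d i)⁻¹ * d i) = fun _ => (1:ℝ) := funext fun i => inv_mul_cancel₀ (hd i)
    rw [this, diagonal_one]
  calc U * diagonal (fun i => (d i)⁻¹) * star U * (U * diagonal d * star U)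
      = U * (diagonal (fun i => (d i)⁻¹) * (star U * U) * diagonal d) * star U := by
        noncomm_ring
    _ = 1 := by rw [hU1, mul_one, hdd, mul_one, hU2]

lemma inv_spectral {A : Matrix n n ℝ} (hA : A.PosDef) :
    A⁻¹ = (hA.1.eigenvectorUnitary : Matrix n n ℝ) * diagonal (fun i => (hA.1.eigenvalues i)⁻¹) *
      star (hA.1.eigenvectorUnitary : Matrix n n ℝ) := by
  have h := congrArg Inv.inv (spectral_real hA.1)
  rw [h, unitary_conj_inv _ (hA.1.eigenvectorUnitary).2 _
    (fun i => (hA.eigenvalues_pos i).ne')]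

lemma inv_quadform_ge {A : Matrix n n ℝ} (hA : A.PosDef) {M : ℝ}
    (hC : ∀ i, hA.1.eigenvalues i ≤ M) (x : n → ℝ) :
    M⁻¹ * (x ⬝ᵥ x) ≤ x ⬝ᵥ (A⁻¹ *ᵥ x) := by
  rw [inv_spectral hA, conj_quadform, conj_norm _ (hA.1.eigenvectorUnitary).2, Finset.mul_sum]
  refine Finset.sum_le_sum fun i _ => ?_
  refine mul_le_mul_of_nonneg_right ?_ (sq_nonneg _)
  exact inv_anti₀ (hA.eigenvalues_pos i) (hC i)
lemma psd_trace_nonneg {M : Matrix n n ℝ} (hM : M.PosSemidef) : 0 ≤ M.trace := by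
  rw [Matrix.trace]
  refine Finset.sum_nonneg fun i _ => ?_
  have := hM.diag_nonneg (i := i)
  simpa [Matrix.diag] using this

lemma trace_quad_ge {C Q : Matrix n n ℝ} (hC : C.PosSemidef) {a : ℝ}
    (hQ : (Q - a • 1).PosSemidef) : a * C.trace ≤ (C * Q).trace := by
  obtain ⟨B, hB⟩ : ∃ B : Matrix n n ℝ, C = Bᴴ * B := by
    open scoped MatrixOrder in exact CStarAlgebra.nonneg_iff_eq_star_mul_self.mp hC.nonneg
  have key : (C * Q).trace - a * C.trace = (C * (Q - a • 1)).trace := by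
    rw [Matrix.mul_sub, Matrix.trace_sub, Matrix.mul_smul, Matrix.mul_one, Matrix.trace_smul]
    simp
  have h2 : (C * (Q - a • 1)).trace = (B * (Q - a • 1) * Bᴴ).trace := by
    rw [hB, Matrix.mul_assoc, Matrix.trace_mul_comm]
  have h3 : 0 ≤ (B * (Q - a • 1) * Bᴴ).trace :=
    psd_trace_nonneg (hQ.mul_mul_conjTranspose_same B)
  linarith [key ▸ (h2 ▸ h3)]

lemma trace_eq_sum_eigenvalues {A : Matrix n n ℝ} (hA : A.IsHermitian) :
    A.trace = ∑ i, hA.eigenvalues i := by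
  conv_lhs => rw [spectral_real hA]
  rw [Matrix.trace_mul_cycle, Matrix.mem_unitaryGroup_iff'.mp hA.eigenvectorUnitary.2, one_mul,
    Matrix.trace_diagonal]

lemma quadform_abs_le (Δ : Matrix n n ℝ) (x : n → ℝ) :
    |x ⬝ᵥ (Δ *ᵥ x)| ≤ Real.sqrt (∑ i, ∑ j, (Δ i j)^2) * (x ⬝ᵥ x) := by
  have hxx : (0:ℝ) ≤ x ⬝ᵥ x := by
    rw [dotProduct]
    exact Finset.sum_nonneg fun i _ => mul_self_nonneg _
  have hexp : x ⬝ᵥ (Δ *ᵥ x) = ∑ ij : n × n, Δ ij.1 ij.2 * (x ij.1 * x ij.2) := by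
    rw [Fintype.sum_prod_type, dotProduct]
    refine Finset.sum_congr rfl fun i _ => ?_
    rw [Matrix.mulVec, dotProduct, Finset.mul_sum]
    exact Finset.sum_congr rfl fun j _ => by ring
  have hcs := Finset.sum_mul_sq_le_sq_mul_sq Finset.univ
    (fun ij : n × n => Δ ij.1 ij.2) (fun ij : n × n => x ij.1 * x ij.2)
  have hsq : ∑ ij : n × n, (x ij.1 * x ij.2)^2 = (x ⬝ᵥ x)^2 := by
    rw [Fintype.sum_prod_type, dotProduct, pow_two, Finset.sum_mul_sum]
    exact Finset.sum_congr rfl fun i _ => Finset.sum_congr rfl fun j _ => by ring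
  have hsum : ∑ ij : n × n, (Δ ij.1 ij.2)^2 = ∑ i, ∑ j, (Δ i j)^2 :=
    Fintype.sum_prod_type _
  rw [hexp]
  have habs : |∑ ij : n × n, Δ ij.1 ij.2 * (x ij.1 * x ij.2)| =
      Real.sqrt ((∑ ij : n × n, Δ ij.1 ij.2 * (x ij.1 * x ij.2))^2) := by
    rw [Real.sqrt_sq_eq_abs]
  rw [habs]
  calc Real.sqrt ((∑ ij : n × n, Δ ij.1 ij.2 * (x ij.1 * x ij.2))^2)
      ≤ Real.sqrt ((∑ ij : n × n, (Δ ij.1 ij.2)^2) * ∑ ij : n × n, (x ij.1 * x ij.2)^2) :=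
        Real.sqrt_le_sqrt hcs
    _ = Real.sqrt (∑ i, ∑ j, (Δ i j)^2) * (x ⬝ᵥ x) := by
        rw [hsq, Real.sqrt_mul (Finset.sum_nonneg fun ij _ => sq_nonneg _), hsum,
          Real.sqrt_sq hxx]
lemma posdef_quad {M : Matrix n n ℝ} (hM : M.PosDef) {x : n → ℝ} (hx : x ≠ 0) :
    0 < x ⬝ᵥ (M *ᵥ x) := by simpa using hM.dotProduct_mulVec_pos hx

lemma posdef_mk {M : Matrix n n ℝ} (hH : M.IsHermitian)
    (h : ∀ x : n → ℝ, x ≠ 0 → 0 < x ⬝ᵥ (M *ᵥ x)) : M.PosDef :=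
  Matrix.PosDef.of_dotProduct_mulVec_pos hH fun x hx => by simpa using h x hx

lemma possemidef_mk {M : Matrix n n ℝ} (hH : M.IsHermitian)
    (h : ∀ x : n → ℝ, 0 ≤ x ⬝ᵥ (M *ᵥ x)) : M.PosSemidef :=
  Matrix.PosSemidef.of_dotProduct_mulVec_nonneg hH fun x => by simpa using h x

lemma unitary_conj_mul (U : Matrix n n ℝ) (hU : U ∈ Matrix.unitaryGroup n ℝ)
    (d e : n → ℝ) :
    (U * diagonal d * star U) * (U * diagonal e * star U)
      = U * diagonal (fun i => d i * e i) * star U := by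
  have hU1 : star U * U = 1 := Matrix.mem_unitaryGroup_iff'.mp hU
  calc (U * diagonal d * star U) * (U * diagonal e * star U)
      = U * (diagonal d * (star U * U) * diagonal e) * star U := by noncomm_ring
    _ = U * diagonal (fun i => d i * e i) * star U := by
        rw [hU1, mul_one, diagonal_mul_diagonal]

lemma hermitian_conj (U : Matrix n n ℝ) (d : n → ℝ) :
    (U * diagonal d * star U).IsHermitian := by
  unfold Matrix.IsHermitian
  rw [Matrix.conjTranspose_mul, Matrix.conjTranspose_mul]
  rw [Matrix.conjTranspose_eq_transpose_of_trivial, Matrix.conjTranspose_eq_transpose_of_trivial,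
    Matrix.conjTranspose_eq_transpose_of_trivial, Matrix.diagonal_transpose, ← star_real,
    ← star_real, star_star]
  noncomm_ring

lemma posdef_conj_s4 {Y B : Matrix n n ℝ} (hY : Y.PosDef) (hB : B.IsHermitian)
    (hBdet : B.det ≠ 0) : (B * Y * B).PosDef := by
  have hBt : Bᵀ = B := by
    rw [← Matrix.conjTranspose_eq_transpose_of_trivial]; exact hB
  refine posdef_mk ?_ ?_
  · unfold Matrix.IsHermitian
    rw [Matrix.conjTranspose_mul, Matrix.conjTranspose_mul, hB.eq, hY.1.eq]
    noncomm_ring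
  · intro x hx
    have hBx : B *ᵥ x ≠ 0 := by
      intro hcon
      have : Function.Injective (B.mulVec) :=
        Matrix.mulVec_injective_iff_isUnit.mpr (isUnit_iff_ne_zero.mpr ?_ |> 
          (Matrix.isUnit_iff_isUnit_det B).mpr)
      · exact hx (this (by simpa using hcon))
      · exact hBdet
    have key : x ⬝ᵥ ((B * Y * B) *ᵥ x) = (B *ᵥ x) ⬝ᵥ (Y *ᵥ (B *ᵥ x)) := by
      rw [← Matrix.mulVec_mulVec, ← Matrix.mulVec_mulVec, Matrix.dotProduct_mulVec x B,
        ← hBt, Matrix.mulVec_transpose]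
      rw [hBt]
    rw [key]
    exact posdef_quad hY hBx

lemma logdet_concave {X Y : Matrix n n ℝ} (hX : X.PosDef) (hY : Y.PosDef) :
    Real.log Y.det - Real.log X.det ≤ (Y * X⁻¹).trace - Fintype.card n := by
  classical
  set U := (hX.1.eigenvectorUnitary : Matrix n n ℝ) with hUdef
  have hUmem := hX.1.eigenvectorUnitary.2
  set R := U * diagonal (fun i => Real.sqrt (hX.1.eigenvalues i)) * star U with hRdef
  have hRR : R * R = X := by
    rw [hRdef, unitary_conj_mul U hUmem]
    have : (fun i => Real.sqrt (hX.1.eigenvalues i) * Real.sqrt (hX.1.eigenvalues i))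
        = hX.1.eigenvalues := by
      funext i
      exact Real.mul_self_sqrt (hX.eigenvalues_pos i).le
    rw [this, ← spectral_real hX.1]
  have hRH : R.IsHermitian := hermitian_conj U _
  have hdetR : R.det * R.det = X.det := by
    rw [← Matrix.det_mul, hRR]
  have hdetR0 : R.det ≠ 0 := by
    intro h; rw [h, mul_zero] at hdetR; exact hX.det_pos.ne (hdetR)
  have hRinvH : (R⁻¹).IsHermitian := hRH.inv
  have hRRinv : R⁻¹ * R⁻¹ = X⁻¹ := by rw [← Matrix.mul_inv_rev, hRR]
  have hdetRinv : (R⁻¹).det = (R.det)⁻¹ := by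
    rw [Matrix.det_nonsing_inv, Ring.inverse_eq_inv']
  have hdetRinv0 : (R⁻¹).det ≠ 0 := by rw [hdetRinv]; exact inv_ne_zero hdetR0
  set W := R⁻¹ * Y * R⁻¹ with hWdef
  have hW : W.PosDef := posdef_conj_s4 hY hRinvH hdetRinv0
  have detW : W.det = Y.det / X.det := by
    rw [hWdef, Matrix.det_mul, Matrix.det_mul, hdetRinv, ← hdetR]
    field_simp
  have trW : W.trace = (Y * X⁻¹).trace := by
    rw [hWdef, Matrix.trace_mul_cycle, Matrix.mul_assoc, ← Matrix.mul_assoc, hRRinv,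
      Matrix.trace_mul_comm]
  have hlogW : Real.log W.det = Real.log Y.det - Real.log X.det := by
    rw [detW, Real.log_div hY.det_pos.ne' hX.det_pos.ne']
  have hsum : Real.log W.det ≤ W.trace - Fintype.card n := by
    rw [hW.1.det_eq_prod_eigenvalues, trace_eq_sum_eigenvalues hW.1]
    simp only [RCLike.ofReal_real_eq_id, id]
    rw [Real.log_prod (fun i _ => (hW.eigenvalues_pos i).ne')]
    have hcard : (Fintype.card n : ℝ) = ∑ _i : n, (1:ℝ) := by simp
    rw [hcard, ← Finset.sum_sub_distrib]
    exact Finset.sum_le_sum fun i _ =>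
      Real.log_le_sub_one_of_pos (hW.eigenvalues_pos i)
  linarith [hlogW ▸ hsum, trW ▸ (le_refl W.trace)]
lemma dot_self_nonneg (x : n → ℝ) : 0 ≤ x ⬝ᵥ x :=
  Finset.sum_nonneg fun i _ => mul_self_nonneg _

lemma dot_self_pos {x : n → ℝ} (hx : x ≠ 0) : 0 < x ⬝ᵥ x := by
  obtain ⟨i, hi⟩ := Function.ne_iff.mp hx
  exact Finset.sum_pos' (fun j (_ : j ∈ Finset.univ) => mul_self_nonneg (x j))
    ⟨i, Finset.mem_univ i, mul_self_pos.mpr hi⟩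

lemma hermitian_smul {Δ : Matrix n n ℝ} (h : Δ.IsHermitian) (t : ℝ) : (t • Δ).IsHermitian := by
  unfold Matrix.IsHermitian at *
  rw [Matrix.conjTranspose_smul, h, star_trivial]

lemma shifted_psd {Q : Matrix n n ℝ} (hQ : Q.IsHermitian) {a : ℝ}
    (h : ∀ x : n → ℝ, a * (x ⬝ᵥ x) ≤ x ⬝ᵥ (Q *ᵥ x)) : (Q - a • 1).PosSemidef := by
  refine possemidef_mk (hQ.sub (hermitian_smul Matrix.isHermitian_one a)) fun x => ?_
  have hcalc : x ⬝ᵥ ((Q - a • 1) *ᵥ x) = x ⬝ᵥ (Q *ᵥ x) - a * (x ⬝ᵥ x) := by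
    rw [Matrix.sub_mulVec, dotProduct_sub, Matrix.smul_mulVec, Matrix.one_mulVec,
      dotProduct_smul, smul_eq_mul]
  rw [hcalc]
  linarith [h x]

lemma trace_sq {Δ : Matrix n n ℝ} (hΔ : Δ.IsHermitian) :
    (Δ * Δ).trace = ∑ i, ∑ j, (Δ i j)^2 := by
  have hsym : ∀ i j, Δ j i = Δ i j := fun i j => by
    have := congrFun (congrFun hΔ.eq i) j
    simpa [Matrix.conjTranspose_apply] using this
  rw [Matrix.trace]
  refine Finset.sum_congr rfl fun i _ => ?_
  simp only [Matrix.diag_apply, Matrix.mul_apply]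
  exact Finset.sum_congr rfl fun j _ => by rw [hsym i j]; ring

end Helpers

/-- STATEMENT 4: margin (Taylor) lemma for the graphical Lasso.  If `Θ₀` is symmetric
positive definite with all eigenvalues in `[1/L, L]` and `Δ` is symmetric with
`‖Δ‖_F ≤ 1/(2L)`, then `Θ₀ + Δ` is positive definite with `λ_min(Θ₀+Δ) ≥ 1/(2L)`, and
`E(Δ) := trace(ΔΣ₀) − (log det(Δ+Θ₀) − log det Θ₀) ≥ ‖Δ‖_F²/(2(L+1/(2L))²)`,
where `Σ₀ := Θ₀⁻¹`. -/theorem stmt4 {p : ℕ} (L : ℝ) (hL : 1 ≤ L) (Θ₀ Δ : Matrix (Fin p) (Fin p) ℝ)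
    (hΘ₀ : Θ₀.PosDef)
    (heig : ∀ i, 1 / L ≤ hΘ₀.isHermitian.eigenvalues i ∧ hΘ₀.isHermitian.eigenvalues i ≤ L)
    (hΔ : Δ.IsHermitian)
    (hF : frobNorm Δ ≤ 1 / (2 * L)) :
    (Θ₀ + Δ).PosDef ∧
    (∀ (h : (Θ₀ + Δ).IsHermitian) (i : Fin p), 1 / (2 * L) ≤ h.eigenvalues i) ∧
    frobNorm Δ ^ 2 / (2 * (L + 1 / (2 * L)) ^ 2) ≤
      (Δ * Θ₀⁻¹).trace - (Real.log (Δ + Θ₀).det - Real.log Θ₀.det) := by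
  classical
  have hL0 : (0:ℝ) < L := lt_of_lt_of_le one_pos hL
  set F := frobNorm Δ with hFdef
  have hF0 : 0 ≤ F := Real.sqrt_nonneg _
  set M : ℝ := L + 1 / (2 * L) with hMdef
  have hM0 : 0 < M := by positivity
  have hLM : L ≤ M := by
    have : 0 < 1/(2*L) := by positivity
    rw [hMdef]; linarith
  have hΔq : ∀ x : Fin p → ℝ, |x ⬝ᵥ (Δ *ᵥ x)| ≤ F * (x ⬝ᵥ x) := fun x => quadform_abs_le Δ x
  have hΘlo : ∀ x : Fin p → ℝ, (1/L) * (x ⬝ᵥ x) ≤ x ⬝ᵥ (Θ₀ *ᵥ x) :=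
    quadform_ge hΘ₀.1 (fun i => (heig i).1)
  have hΘhi : ∀ x : Fin p → ℝ, x ⬝ᵥ (Θ₀ *ᵥ x) ≤ L * (x ⬝ᵥ x) :=
    quadform_le hΘ₀.1 (fun i => (heig i).2)
  set S : ℝ → Matrix (Fin p) (Fin p) ℝ := fun t => Θ₀ + t • Δ with hSdef
  have hSH : ∀ t, (S t).IsHermitian := fun t => hΘ₀.1.add (hermitian_smul hΔ t)
  have hSexp : ∀ (t : ℝ) (x : Fin p → ℝ),
      x ⬝ᵥ (S t *ᵥ x) = x ⬝ᵥ (Θ₀ *ᵥ x) + t * (x ⬝ᵥ (Δ *ᵥ x)) := by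
    intro t x
    simp only [hSdef]
    rw [Matrix.add_mulVec, dotProduct_add, Matrix.smul_mulVec,
      dotProduct_smul, smul_eq_mul]
  have hSlo : ∀ t ∈ Set.Icc (0:ℝ) 1, ∀ x : Fin p → ℝ,
      (1/(2*L)) * (x ⬝ᵥ x) ≤ x ⬝ᵥ (S t *ᵥ x) := by
    intro t ht x
    have hxx := dot_self_nonneg x
    have h3 : -(F * (x ⬝ᵥ x)) ≤ x ⬝ᵥ (Δ *ᵥ x) := neg_le_of_abs_le (hΔq x)
    have h4 : t * (-(F * (x ⬝ᵥ x))) ≤ t * (x ⬝ᵥ (Δ *ᵥ x)) :=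
      mul_le_mul_of_nonneg_left h3 ht.1
    have h5 : t * F * (x ⬝ᵥ x) ≤ (1/(2*L)) * (x ⬝ᵥ x) := by
      refine mul_le_mul_of_nonneg_right ?_ hxx
      calc t * F ≤ 1 * F := mul_le_mul_of_nonneg_right ht.2 hF0
      _ = F := one_mul F
      _ ≤ 1/(2*L) := hF
    have h6 : t * (-(F * (x ⬝ᵥ x))) = -(t * F * (x ⬝ᵥ x)) := by ring
    have h7 : (1/L) * (x ⬝ᵥ x) - (1/(2*L)) * (x ⬝ᵥ x) = (1/(2*L)) * (x ⬝ᵥ x) := by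
      field_simp
      ring
    have := hΘlo x
    rw [hSexp]
    linarith [h4, h5]
  have hSPD : ∀ t ∈ Set.Icc (0:ℝ) 1, (S t).PosDef := by
    intro t ht
    refine posdef_mk (hSH t) fun x hx => lt_of_lt_of_le ?_ (hSlo t ht x)
    have := dot_self_pos hx
    positivity
  have hShi : ∀ t ∈ Set.Icc (0:ℝ) 1, ∀ x : Fin p → ℝ,
      x ⬝ᵥ (S t *ᵥ x) ≤ M * (x ⬝ᵥ x) := by
    intro t ht x
    have hxx := dot_self_nonneg x
    have h3 : x ⬝ᵥ (Δ *ᵥ x) ≤ F * (x ⬝ᵥ x) := le_of_abs_le (hΔq x)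
    have h4 : t * (x ⬝ᵥ (Δ *ᵥ x)) ≤ t * (F * (x ⬝ᵥ x)) :=
      mul_le_mul_of_nonneg_left h3 ht.1
    have h5 : t * (F * (x ⬝ᵥ x)) ≤ (1/(2*L)) * (x ⬝ᵥ x) := by
      rw [← mul_assoc]
      refine mul_le_mul_of_nonneg_right ?_ hxx
      calc t * F ≤ 1 * F := mul_le_mul_of_nonneg_right ht.2 hF0
      _ = F := one_mul F
      _ ≤ 1/(2*L) := hF
    have := hΘhi x
    rw [hSexp, hMdef]
    linarith
  have hSinvq : ∀ t (ht : t ∈ Set.Icc (0:ℝ) 1), ∀ x : Fin p → ℝ,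
      M⁻¹ * (x ⬝ᵥ x) ≤ x ⬝ᵥ ((S t)⁻¹ *ᵥ x) := by
    intro t ht x
    exact inv_quadform_ge (hSPD t ht)
      (fun i => eigenvalue_le_of_quadform (hSPD t ht).1 (hShi t ht) i) x
  have hΘinvq : ∀ x : Fin p → ℝ, L⁻¹ * (x ⬝ᵥ x) ≤ x ⬝ᵥ (Θ₀⁻¹ *ᵥ x) := by
    intro x
    exact inv_quadform_ge hΘ₀ (fun i => (heig i).2) x
  have hQS : ∀ t (ht : t ∈ Set.Icc (0:ℝ) 1), ((S t)⁻¹ - M⁻¹ • 1).PosSemidef :=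
    fun t ht => shifted_psd (hSPD t ht).1.inv (hSinvq t ht)
  have hQΘ : (Θ₀⁻¹ - L⁻¹ • 1).PosSemidef := shifted_psd hΘ₀.1.inv hΘinvq
  have hC1 : (Δ * Θ₀⁻¹ * Δ).PosSemidef := by
    have := (hΘ₀.inv.posSemidef).conjTranspose_mul_mul_same Δ
    rwa [hΔ.eq] at this
  have hC2 : (Δ * Δ).PosSemidef := by
    have := Matrix.posSemidef_conjTranspose_mul_self Δ
    rwa [hΔ.eq] at this
  have htrΔΔ : (Δ * Δ).trace = F^2 := by
    rw [trace_sq hΔ, hFdef]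
    unfold frobNorm
    exact (Real.sq_sqrt (Finset.sum_nonneg fun i _ =>
      Finset.sum_nonneg fun j _ => sq_nonneg _)).symm
  have hMinv : M⁻¹ ≤ L⁻¹ := inv_anti₀ hL0 hLM
  have htrC1 : M⁻¹ * F^2 ≤ (Δ * Θ₀⁻¹ * Δ).trace := by
    have h1 : (Δ * Θ₀⁻¹ * Δ).trace = ((Δ * Δ) * Θ₀⁻¹).trace := Matrix.trace_mul_cycle Δ Θ₀⁻¹ Δ
    have h2 : L⁻¹ * (Δ * Δ).trace ≤ ((Δ * Δ) * Θ₀⁻¹).trace := trace_quad_ge hC2 hQΘ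
    have h3 : M⁻¹ * F^2 ≤ L⁻¹ * F^2 :=
      mul_le_mul_of_nonneg_right hMinv (sq_nonneg F)
    calc M⁻¹ * F^2 ≤ L⁻¹ * F^2 := h3
      _ = L⁻¹ * (Δ * Δ).trace := by rw [htrΔΔ]
      _ ≤ ((Δ * Δ) * Θ₀⁻¹).trace := h2
      _ = (Δ * Θ₀⁻¹ * Δ).trace := h1.symm
  set K : ℝ := M⁻¹ * (M⁻¹ * F^2) with hKdef
  have hKnn : 0 ≤ K := by positivity
  set T₀ : ℝ := (Δ * Θ₀⁻¹).trace with hT₀def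
  have hdec : ∀ s (hs : s ∈ Set.Icc (0:ℝ) 1),
      s * K ≤ T₀ - (Δ * (S s)⁻¹).trace := by
    intro s hs
    have hΘunit : IsUnit Θ₀.det := hΘ₀.det_pos.ne'.isUnit
    have hSunit : IsUnit (S s).det := (hSPD s hs).det_pos.ne'.isUnit
    have hid : Θ₀⁻¹ = (S s)⁻¹ + s • (Θ₀⁻¹ * Δ * (S s)⁻¹) := by
      have h1 : Θ₀⁻¹ * (S s) = 1 + s • (Θ₀⁻¹ * Δ) := by
        simp only [hSdef]
        rw [Matrix.mul_add, Matrix.nonsing_inv_mul _ hΘunit, Matrix.mul_smul]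
      calc Θ₀⁻¹ = Θ₀⁻¹ * ((S s) * (S s)⁻¹) := by
            rw [Matrix.mul_nonsing_inv _ hSunit, mul_one]
      _ = (Θ₀⁻¹ * (S s)) * (S s)⁻¹ := by rw [Matrix.mul_assoc]
      _ = (1 + s • (Θ₀⁻¹ * Δ)) * (S s)⁻¹ := by rw [h1]
      _ = (S s)⁻¹ + s • (Θ₀⁻¹ * Δ * (S s)⁻¹) := by
          rw [Matrix.add_mul, one_mul, Matrix.smul_mul]
    have htr : T₀ = (Δ * (S s)⁻¹).trace + s * ((Δ * Θ₀⁻¹ * Δ) * (S s)⁻¹).trace := by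
      rw [hT₀def]
      conv_lhs => rw [hid]
      rw [Matrix.mul_add, Matrix.trace_add, Matrix.mul_smul, Matrix.trace_smul, smul_eq_mul]
      congr 2
      noncomm_ring
    have hbig : M⁻¹ * (M⁻¹ * F^2) ≤ ((Δ * Θ₀⁻¹ * Δ) * (S s)⁻¹).trace := by
      have h1 := trace_quad_ge hC1 (hQS s hs)
      have h2 : M⁻¹ * (M⁻¹ * F^2) ≤ M⁻¹ * (Δ * Θ₀⁻¹ * Δ).trace :=
        mul_le_mul_of_nonneg_left htrC1 (inv_nonneg.mpr hM0.le)
      linarith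
    have := mul_le_mul_of_nonneg_left hbig hs.1
    rw [hKdef]
    linarith [htr]
  have hstep : ∀ s t, s ∈ Set.Icc (0:ℝ) 1 → t ∈ Set.Icc (0:ℝ) 1 →
      Real.log (S t).det - Real.log (S s).det ≤ (t - s) * (Δ * (S s)⁻¹).trace := by
    intro s t hs ht
    have h0 := logdet_concave (hSPD s hs) (hSPD t ht)
    have hST : S t = S s + (t - s) • Δ := by
      simp only [hSdef]
      rw [sub_smul]
      abel
    have htr2 : (S t * (S s)⁻¹).trace
        = (Fintype.card (Fin p) : ℝ) + (t - s) * (Δ * (S s)⁻¹).trace := by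
      rw [hST, Matrix.add_mul, Matrix.trace_add,
        Matrix.mul_nonsing_inv _ (hSPD s hs).det_pos.ne'.isUnit, Matrix.trace_one,
        Matrix.smul_mul, Matrix.trace_smul, smul_eq_mul]
    linarith [h0, htr2.le, htr2.ge]
  have hmain : ∀ N : ℕ, 1 ≤ N →
      K/2 - K/(2*N) ≤ T₀ - (Real.log (S 1).det - Real.log (S 0).det) := by
    intro N hN
    have hNR : (0:ℝ) < N := by exact_mod_cast hN
    have hmem : ∀ k : ℕ, k ≤ N → ((k:ℝ)/N) ∈ Set.Icc (0:ℝ) 1 := by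
      intro k hk
      constructor
      · positivity
      · rw [div_le_one hNR]; exact_mod_cast hk
    set g : ℕ → ℝ := fun k => Real.log (S ((k:ℝ)/N)).det with hgdef
    have htel : ∑ k ∈ Finset.range N, (g (k+1) - g k) = g N - g 0 := Finset.sum_range_sub g N
    have hgN : g N = Real.log (S 1).det := by
      simp only [hgdef]
      rw [div_self hNR.ne']
    have hg0 : g 0 = Real.log (S 0).det := by
      simp only [hgdef]
      norm_num
    have hterm : ∀ k ∈ Finset.range N,
        g (k+1) - g k ≤ (1/N) * T₀ - ((k:ℝ)/(N*N)) * K := by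
      intro k hk
      have hkN := Finset.mem_range.mp hk
      have hs := hmem k hkN.le
      have ht := hmem (k+1) hkN
      have h1 := hstep ((k:ℝ)/N) (((k:ℕ)+1:ℝ)/N) hs (by exact_mod_cast ht)
      have hts : ((k:ℕ)+1:ℝ)/N - (k:ℝ)/N = 1/N := by field_simp; ring
      have h2 := hdec ((k:ℝ)/N) hs
      have h3 : (Δ * (S ((k:ℝ)/N))⁻¹).trace ≤ T₀ - ((k:ℝ)/N) * K := by linarith
      have hg1 : g (k+1) = Real.log (S (((k:ℕ)+1:ℝ)/N)).det := by
        simp only [hgdef]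
        norm_num
      have hg2 : g k = Real.log (S ((k:ℝ)/N)).det := rfl
      rw [hg1, hg2]
      calc Real.log (S (((k:ℕ)+1:ℝ)/N)).det - Real.log (S ((k:ℝ)/N)).det
          ≤ (((k:ℕ)+1:ℝ)/N - (k:ℝ)/N) * (Δ * (S ((k:ℝ)/N))⁻¹).trace := h1
        _ = (1/N) * (Δ * (S ((k:ℝ)/N))⁻¹).trace := by rw [hts]
        _ ≤ (1/N) * (T₀ - ((k:ℝ)/N) * K) := by
            refine mul_le_mul_of_nonneg_left h3 ?_
            positivity
        _ = (1/N) * T₀ - ((k:ℝ)/(N*N)) * K := by field_simp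
    have hsumk : ∑ k ∈ Finset.range N, (k:ℝ) = (N:ℝ) * ((N:ℝ) - 1) / 2 := by
      have h := Finset.sum_range_id_mul_two N
      have hcast : ((∑ i ∈ Finset.range N, i : ℕ) : ℝ) * 2 = (N:ℝ) * ((N:ℝ) - 1) := by
        rw [← Nat.cast_ofNat, ← Nat.cast_mul, h, Nat.cast_mul, Nat.cast_sub hN]
        push_cast
        ring
      push_cast at hcast
      linarith
    have hsumbound : ∑ k ∈ Finset.range N, ((1/N) * T₀ - ((k:ℝ)/(N*N)) * K)
        = T₀ - (K/2 - K/(2*N)) := by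
      rw [Finset.sum_sub_distrib, Finset.sum_const, Finset.card_range]
      have h1 : ∑ k ∈ Finset.range N, ((k:ℝ)/(N*N)) * K
          = (∑ k ∈ Finset.range N, (k:ℝ)) * (K / (N*N)) := by
        rw [Finset.sum_mul]
        refine Finset.sum_congr rfl fun k _ => by ring
      rw [h1, hsumk, nsmul_eq_mul]
      field_simp
    have hsum := Finset.sum_le_sum hterm
    rw [htel, hsumbound, hgN, hg0] at hsum
    linarith
  have hlim : Filter.Tendsto (fun N : ℕ => K/2 - K/(2*N)) Filter.atTop (nhds (K/2)) := by
    have h1 := tendsto_const_div_atTop_nhds_zero_nat (K/2)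
    have h2 : (fun N : ℕ => K/2 - K/(2*N)) = fun N : ℕ => K/2 - (K/2)/N := by
      funext N
      rw [div_div]
    rw [h2]
    simpa using Filter.Tendsto.sub (tendsto_const_nhds (x := K/2)) h1
  have hE : K/2 ≤ T₀ - (Real.log (S 1).det - Real.log (S 0).det) :=
    le_of_tendsto hlim (Filter.eventually_atTop.mpr ⟨1, fun N hN => hmain N hN⟩)
  have h01 : (1:ℝ) ∈ Set.Icc (0:ℝ) 1 := ⟨zero_le_one, le_refl 1⟩
  have hS1 : S 1 = Θ₀ + Δ := by
    simp only [hSdef]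
    rw [one_smul]
  have hS0 : S 0 = Θ₀ := by
    simp only [hSdef]
    rw [zero_smul, add_zero]
  refine ⟨hS1 ▸ hSPD 1 h01, ?_, ?_⟩
  · intro h i
    refine eigenvalue_ge_of_quadform h (fun x => ?_) i
    have := hSlo 1 h01 x
    rwa [hS1] at this
  · have hdet1 : (S 1).det = (Δ + Θ₀).det := by rw [hS1, add_comm]
    have hdet0 : (S 0).det = Θ₀.det := by rw [hS0]
    rw [hdet1, hdet0] at hE
    have hK2 : K/2 = F^2 / (2 * M^2) := by
      rw [hKdef]
      rw [div_eq_div_iff (by norm_num) (by positivity)]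
      field_simp
    linarith [hK2 ▸ hE]
end

section
/- Let Σ₀ be an invertible p×p real matrix whose inverse Θ₀ := Σ₀⁻¹ is symmetric. Let Σ̂, Θ̂ and η be p×p real matrices satisfying Σ̂Θ̂ − I + η = 0. Then Θ̂ + Θ̂ᵀη = Θ̂ + Θ̂ᵀ − Θ̂ᵀΣ̂Θ̂, and the decomposition Θ̂ + Θ̂ᵀη − Θ₀ = −Θ₀(Σ̂ − Σ₀)Θ₀ + rem₀ + rem_reg holds, where rem₀ := −Θ₀(Σ̂ − Σ₀)(Θ̂ − Θ₀) and rem_reg := (Θ̂ − Θ₀)ᵀη. -/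
open Matrix

/-- de-biasing decomposition for an approximate inverse `Θ̂` of `Σ̂` with bias
term `η` satisfying `Σ̂Θ̂ − I + η = 0`, around `Θ₀ := Σ₀⁻¹` (assumed symmetric).
(`Shat` is `Σ̂`, `S₀` is `Σ₀`.) -/
theorem stmt7 {p : ℕ} (S₀ Shat Θhat η : Matrix (Fin p) (Fin p) ℝ)
    (hS₀ : IsUnit S₀.det)
    (Θ₀ : Matrix (Fin p) (Fin p) ℝ) (hΘ₀ : Θ₀ = S₀⁻¹)
    (hsym : Θ₀.IsHermitian)
    (hkkt : Shat * Θhat - 1 + η = 0)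
    (rem₀ remreg : Matrix (Fin p) (Fin p) ℝ)
    (hrem₀ : rem₀ = -(Θ₀ * (Shat - S₀) * (Θhat - Θ₀)))
    (hremreg : remreg = (Θhat - Θ₀)ᵀ * η) :
    Θhat + Θhatᵀ * η = Θhat + Θhatᵀ - Θhatᵀ * Shat * Θhat ∧
    Θhat + Θhatᵀ * η - Θ₀ = -(Θ₀ * (Shat - S₀) * Θ₀) + rem₀ + remreg := by
  have hη : η = 1 - Shat * Θhat := by
    have := hkkt
    linear_combination (norm := noncomm_ring) hkkt
  have h1 : Θ₀ * S₀ = 1 := by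
    rw [hΘ₀]; exact Matrix.nonsing_inv_mul S₀ hS₀
  have h2 : Θ₀ᵀ = Θ₀ := hsym
  subst hη hrem₀ hremreg
  constructor
  · noncomm_ring
  · have expand : -(Θ₀ * (Shat - S₀) * Θ₀) + -(Θ₀ * (Shat - S₀) * (Θhat - Θ₀)) +
        (Θhat - Θ₀)ᵀ * (1 - Shat * Θhat)
        = -(Θ₀ * (Shat - S₀) * Θhat) + Θhatᵀ * (1 - Shat * Θhat)
          - Θ₀ᵀ * (1 - Shat * Θhat) := by
      rw [transpose_sub]; noncomm_ring
    rw [expand, h2]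
    have : -(Θ₀ * (Shat - S₀) * Θhat) - Θ₀ * (1 - Shat * Θhat)
        = (Θ₀ * S₀) * Θhat - Θ₀ := by noncomm_ring
    rw [sub_eq_add_neg, add_sub_assoc]
    rw [show -(Θ₀ * (Shat - S₀) * Θhat) + (Θhatᵀ * (1 - Shat * Θhat) - Θ₀ * (1 - Shat * Θhat))
        = (Θ₀ * S₀) * Θhat - Θ₀ + Θhatᵀ * (1 - Shat * Θhat) by noncomm_ring]
    rw [h1]
    noncomm_ring
end

section
/- Let X be a real n×p matrix with columns X₁,…,X_p and set Σ̂ := XᵀX/n. Fix j and let γ̂ ∈ ℝ^{p−1} (indexed by k ≠ j), let λ > 0, and let κ̂ ∈ ℝ^{p−1} satisfy the square-root Lasso KKT conditions X_{−j}ᵀ(X_j − X_{−j}γ̂)/n = λ τ̂ κ̂ and κ̂ᵀγ̂ = ‖γ̂‖₁, where τ̂ := (‖X_j − X_{−j}γ̂‖₂²/n)^{1/2} > 0 and X_{−j} is X with column j removed. Define τ̃² := τ̂² + λ τ̂ ‖γ̂‖₁, and let Θ̂_j ∈ ℝ^p be the vector with j-th entry 1/τ̃² and k-th entry −γ̂_k/τ̃²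 for k ≠ j, and let Ẑ_j ∈ ℝ^p be the vector with j-th entry 0 and k-th entry κ̂_k for k ≠ j. Then Σ̂ Θ̂_j − e_j − λ (τ̂/τ̃²) Ẑ_j = 0, where e_j is the j-th standard basis vector of ℝ^p. -/
open Matrix
open scoped BigOperators

lemma split_sum' {p : ℕ} (j : Fin p) (f : Fin p → ℝ) :
    ∑ b, f b = f j + ∑ k : {k : Fin p // k ≠ j}, f k.1 := by
  rw [← Finset.sum_subtype (Finset.univ.erase j) (fun x => by simp) f,
    Finset.add_sum_erase _ f (Finset.mem_univ j)]

/-- the KKT conditions of the square-root Lasso rewritten as the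
approximate-inverse identity `Σ̂ Θ̂_j − e_j − λ(τ̂/τ̃²)Ẑ_j = 0` for the `j`-th column of
the nodewise square-root Lasso estimator.  Here `X` is the design matrix, `γhat = γ̂` the
square-root Lasso coefficients (indexed by `k ≠ j`), `κ = κ̂` the subgradient,
`r = X_j − X_{−j}γ̂` the residual, `τhat = τ̂`, `τt2 = τ̃²`, `Θj = Θ̂_j` and `Zj = Ẑ_j`. -/
theorem stmt16 {n p : ℕ} (X : Matrix (Fin n) (Fin p) ℝ) (j : Fin p)
    (γhat κ : {k : Fin p // k ≠ j} → ℝ) (lam : ℝ) (hlam : 0 < lam)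
    (r : Fin n → ℝ) (hr : ∀ i, r i = X i j - ∑ k : {k : Fin p // k ≠ j}, X i k.1 * γhat k)
    (τhat : ℝ) (hτhat : τhat = Real.sqrt ((∑ i, (r i) ^ 2) / n)) (hτpos : 0 < τhat)
    (hkkt : ∀ k : {k : Fin p // k ≠ j},
      (∑ i, X i k.1 * r i) / n = lam * τhat * κ k)
    (hsub : ∑ k : {k : Fin p // k ≠ j}, κ k * γhat k = ∑ k : {k : Fin p // k ≠ j}, |γhat k|)
    (τt2 : ℝ) (hτt2 : τt2 = τhat ^ 2 + lam * τhat * ∑ k : {k : Fin p // k ≠ j}, |γhat k|)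
    (Shat : Matrix (Fin p) (Fin p) ℝ) (hShat : ∀ a b, Shat a b = (∑ i, X i a * X i b) / n)
    (Θj : Fin p → ℝ)
    (hΘj : ∀ k : Fin p, Θj k = if h : k = j then 1 / τt2 else -γhat ⟨k, h⟩ / τt2)
    (Zj : Fin p → ℝ)
    (hZj : ∀ k : Fin p, Zj k = if h : k = j then 0 else κ ⟨k, h⟩) :
    Shat *ᵥ Θj - Pi.single j 1 - (lam * τhat / τt2) • Zj = 0 := by
  have hτ2 : τhat ^ 2 = (∑ i, r i ^ 2) / (n : ℝ) := by
    rw [hτhat, Real.sq_sqrt]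
    positivity
  have habs : (0:ℝ) ≤ ∑ k : {k : Fin p // k ≠ j}, |γhat k| :=
    Finset.sum_nonneg fun k _ => abs_nonneg _
  have hτt2pos : 0 < τt2 := by
    rw [hτt2]
    have h1 : 0 < τhat ^ 2 := pow_pos hτpos 2
    have h2 : 0 ≤ lam * τhat * ∑ k : {k : Fin p // k ≠ j}, |γhat k| := by positivity
    linarith
  -- key identity: the residual correlation
  have key : ∀ a : Fin p, Shat a j - ∑ k : {k : Fin p // k ≠ j}, Shat a k.1 * γhat k
      = (∑ i, X i a * r i) / n := by
    intro a
    have h3 : ∑ k : {k : Fin p // k ≠ j}, (∑ i, X i a * X i k.1) * γhat k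
        = ∑ i, X i a * ∑ k : {k : Fin p // k ≠ j}, X i k.1 * γhat k := by
      calc ∑ k : {k : Fin p // k ≠ j}, (∑ i, X i a * X i k.1) * γhat k
          = ∑ k : {k : Fin p // k ≠ j}, ∑ i, X i a * (X i k.1 * γhat k) := by
            simp [Finset.sum_mul, mul_assoc]
        _ = ∑ i, ∑ k : {k : Fin p // k ≠ j}, X i a * (X i k.1 * γhat k) := Finset.sum_comm
        _ = ∑ i, X i a * ∑ k : {k : Fin p // k ≠ j}, X i k.1 * γhat k := by
            simp [Finset.mul_sum]
    simp only [hShat, hr, mul_sub, Finset.sum_sub_distrib]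
    rw [sub_div, ← h3]
    congr 1
    rw [Finset.sum_div]
    exact Finset.sum_congr rfl fun k _ => by ring
  -- entrywise computation
  funext a
  simp only [Pi.sub_apply, Pi.smul_apply, Pi.zero_apply, smul_eq_mul, mulVec, dotProduct]
  rw [split_sum' j (fun b => Shat a b * Θj b)]
  have hsum : Shat a j * Θj j + ∑ k : {k : Fin p // k ≠ j}, Shat a k.1 * Θj k.1
      = ((∑ i, X i a * r i) / n) / τt2 := by
    have e1 : ∀ k : {k : Fin p // k ≠ j}, Shat a k.1 * Θj k.1
        = -(Shat a k.1 * γhat k) / τt2 := by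
      intro k
      rw [hΘj k.1, dif_neg k.2]; ring
    rw [Finset.sum_congr rfl fun k _ => e1 k, hΘj j, dif_pos rfl, ← key a]
    rw [← Finset.sum_div, Finset.sum_neg_distrib, sub_div, neg_div]
    ring
  rw [hsum]
  by_cases ha : a = j
  · -- diagonal entry
    have hXa : ∀ i, X i a = r i + ∑ k : {k : Fin p // k ≠ j}, X i k.1 * γhat k := by
      intro i; rw [ha, hr i]; ring
    have hsplit : ∑ i, X i a * r i
        = ∑ i, r i ^ 2 + ∑ k : {k : Fin p // k ≠ j}, (∑ i, X i k.1 * r i) * γhat k := by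
      calc ∑ i, X i a * r i
          = ∑ i, (r i ^ 2 + ∑ k : {k : Fin p // k ≠ j}, X i k.1 * γhat k * r i) := by
            refine Finset.sum_congr rfl fun i _ => ?_
            rw [hXa i, add_mul, Finset.sum_mul]; ring
        _ = ∑ i, r i ^ 2 + ∑ i, ∑ k : {k : Fin p // k ≠ j}, X i k.1 * γhat k * r i := by
            rw [Finset.sum_add_distrib]
        _ = ∑ i, r i ^ 2 + ∑ k : {k : Fin p // k ≠ j}, (∑ i, X i k.1 * r i) * γhat k := by
            congr 1
            rw [Finset.sum_comm]
            refine Finset.sum_congr rfl fun k _ => ?_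
            rw [Finset.sum_mul]
            exact Finset.sum_congr rfl fun i _ => by ring
    have hnum : (∑ i, X i a * r i) / n = τt2 := by
      rw [hsplit, add_div, ← hτ2, hτt2]
      congr 1
      rw [← hsub, Finset.mul_sum, Finset.sum_div]
      exact Finset.sum_congr rfl fun k _ => by
        rw [mul_div_right_comm, hkkt k]; ring
    rw [hnum, div_self hτt2pos.ne', hZj a, dif_pos ha, mul_zero, ha, Pi.single_eq_same]
    ring
  · rw [Pi.single_eq_of_ne ha, hZj a, dif_neg ha, hkkt ⟨a, ha⟩]
    ring
end
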